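/- arXiv:2205.08546 — 4 statements merged into one kernel-verified Lean document; each statement's English description precedes it below -/
import Mathlib

section
/- Let A be the real vector space of families M : Fin m → Fin o → Matrix (Fin d) (Fin d) ℂ (with convex combinations taken entrywise). Let 𝓕 ⊆ A be nonempty, convex and compact, and let D : A → A → ℝ be continuous and satisfy: (i) D M N ≥ 0, (ii) D M N = 0 ↔ M = N, (iii) the triangle inequality D M N ≤ D M K + D K N, and (iv) joint convexity: for all η ∈ [0,1], D (η•M₁ + (1−η)•M₂) (η•N₁ + (1−η)•N₂) ≤ η·(D M₁ N₁) + (1−η)·(D M₂ N₂). Define R M = ⨅ F ∈ 𝓕, D M F. Then: R M ≥ 0 for all M; R M = 0 ↔ M ∈ 𝓕; R is convex, i.e. R (η•M + (1−η)•N) ≤ η·(R M) + (1−η)·(R N) for all η ∈ [0,1]; and for every map Λ : A → A with Λ '' 𝓕 ⊆ 𝓕 and D (Λ M) (Λ N) ≤ D M N for all M, N, one has R (Λ M) ≤ R M for all M. -/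
open Matrix BigOperators

/-- **Lemma 1 of the paper.** Any (jointly convex) distance function on the space of
families `M : Fin m → Fin o → Matrix (Fin d) (Fin d) ℂ` to a nonempty convex compact
free set `𝓕` induces a faithful (convex) resource monotone `R M = ⨅ F ∈ 𝓕, D M F`. -/
theorem distance_induces_faithful_convex_monotone {m o d : ℕ}
    (𝓕 : Set (Fin m → Fin o → Matrix (Fin d) (Fin d) ℂ))
    (h𝓕ne : 𝓕.Nonempty) (h𝓕conv : Convex ℝ 𝓕) (h𝓕cpt : IsCompact 𝓕)
    (D : (Fin m → Fin o → Matrix (Fin d) (Fin d) ℂ) →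
         (Fin m → Fin o → Matrix (Fin d) (Fin d) ℂ) → ℝ)
    (hDcont : Continuous fun z : (Fin m → Fin o → Matrix (Fin d) (Fin d) ℂ) ×
        (Fin m → Fin o → Matrix (Fin d) (Fin d) ℂ) => D z.1 z.2)
    (hDnonneg : ∀ M N, 0 ≤ D M N)
    (hDfaithful : ∀ M N, D M N = 0 ↔ M = N)
    (hDtriangle : ∀ M N K, D M N ≤ D M K + D K N)
    (hDjointconv : ∀ η : ℝ, 0 ≤ η → η ≤ 1 → ∀ M₁ M₂ N₁ N₂,
      D (η • M₁ + (1 - η) • M₂) (η • N₁ + (1 - η) • N₂)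
        ≤ η * D M₁ N₁ + (1 - η) * D M₂ N₂)
    (R : (Fin m → Fin o → Matrix (Fin d) (Fin d) ℂ) → ℝ)
    (hR : ∀ M, R M = ⨅ F : 𝓕, D M F) :
    (∀ M, 0 ≤ R M) ∧
    (∀ M, R M = 0 ↔ M ∈ 𝓕) ∧
    (∀ η : ℝ, 0 ≤ η → η ≤ 1 → ∀ M N,
      R (η • M + (1 - η) • N) ≤ η * R M + (1 - η) * R N) ∧
    (∀ Λ : (Fin m → Fin o → Matrix (Fin d) (Fin d) ℂ) →
           (Fin m → Fin o → Matrix (Fin d) (Fin d) ℂ),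
      Λ '' 𝓕 ⊆ 𝓕 → (∀ M N, D (Λ M) (Λ N) ≤ D M N) → ∀ M, R (Λ M) ≤ R M) := by
  haveI : Nonempty 𝓕 := h𝓕ne.to_subtype
  have hbdd : ∀ M, BddBelow (Set.range fun F : 𝓕 => D M F) := by
    intro M
    exact ⟨0, by rintro x ⟨F, rfl⟩; exact hDnonneg M F⟩
  have hle : ∀ M (F : _) (hF : F ∈ 𝓕), R M ≤ D M F := by
    intro M F hF
    rw [hR M]
    exact ciInf_le (hbdd M) ⟨F, hF⟩
  have hnonneg : ∀ M, 0 ≤ R M := by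
    intro M
    rw [hR M]
    exact le_ciInf fun F => hDnonneg M F
  -- attainment of the infimum
  have hatt : ∀ M, ∃ F ∈ 𝓕, D M F = R M := by
    intro M
    obtain ⟨F, hF, hmin⟩ := h𝓕cpt.exists_isMinOn h𝓕ne
      ((hDcont.comp (Continuous.prodMk_right M)).continuousOn)
    refine ⟨F, hF, le_antisymm ?_ (hle M F hF)⟩
    rw [hR M]
    exact le_ciInf fun G => hmin G.2
  refine ⟨hnonneg, ?_, ?_, ?_⟩
  · intro M
    constructor
    · intro h0
      obtain ⟨F, hF, hDF⟩ := hatt M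
      have : M = F := (hDfaithful M F).mp (by rw [hDF, h0])
      rwa [this]
    · intro hM
      have h1 : R M ≤ D M M := hle M M hM
      rw [(hDfaithful M M).mpr rfl] at h1
      exact le_antisymm h1 (hnonneg M)
  · intro η hη0 hη1 M N
    obtain ⟨F, hF, hDF⟩ := hatt M
    obtain ⟨G, hG, hDG⟩ := hatt N
    have hmem : η • F + (1 - η) • G ∈ 𝓕 :=
      h𝓕conv hF hG hη0 (by linarith) (by ring)
    calc R (η • M + (1 - η) • N) ≤ D (η • M + (1 - η) • N) (η • F + (1 - η) • G) :=
          hle _ _ hmem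
      _ ≤ η * D M F + (1 - η) * D N G := hDjointconv η hη0 hη1 M N F G
      _ = η * R M + (1 - η) * R N := by rw [hDF, hDG]
  · intro Λ hΛ𝓕 hΛD M
    obtain ⟨F, hF, hDF⟩ := hatt M
    have hΛF : Λ F ∈ 𝓕 := hΛ𝓕 ⟨F, hF, rfl⟩
    calc R (Λ M) ≤ D (Λ M) (Λ F) := hle _ _ hΛF
      _ ≤ D M F := hΛD M F
      _ = R M := hDF
end

section
/- Let M and N be measurement assemblages in dimension d with m settings, o outcomes and weighting p. Let q : Fin m' → ℝ with q y ≥ 0 and ∑ y, q y = 1, let pc : Fin m' → Fin m → ℝ with pc y x ≥ 0 and ∑ x, pc y x = 1 for every y, let r : Fin m' → Fin m → Fin o → Fin o' → ℝ with r y x a b ≥ 0 and ∑ b, r y x a b = 1 for all y, x, a, and suppose ∑ y, q y * pc y x = p x for every x. Define the simulated assemblages M' y b = ∑ x, ∑ a, (pc y x * r y x a b) • M x a and N' y b = ∑ x, ∑ a, (pc y x * r y x a b) • N x a. Then M' and N' are measurement assemblages in dimension d with m' settings and o' outcomes, and the weighted diamond distance (with weights q) satisfies D⋄(M',N') ≤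 D⋄(M,N). -/
open Matrix Kronecker BigOperators ComplexOrder

noncomputable section

def IsDensityMatrix {n : Type*} [Fintype n] [DecidableEq n] (ρ : Matrix n n ℂ) : Prop :=
  ρ.PosSemidef ∧ ρ.trace = 1

noncomputable def traceNorm {n : Type*} [Fintype n] [DecidableEq n] (X : Matrix n n ℂ) : ℝ :=
  (((Matrix.posSemidef_conjTranspose_mul_self X).1.eigenvectorUnitary : Matrix n n ℂ) *
    diagonal (((↑) : ℝ → ℂ) ∘ (√·) ∘ (Matrix.posSemidef_conjTranspose_mul_self X).1.eigenvalues) *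
    (star (Matrix.posSemidef_conjTranspose_mul_self X).1.eigenvectorUnitary : Matrix n n ℂ)).trace.re

noncomputable def specNorm {n : Type*} [Fintype n] [DecidableEq n] (X : Matrix n n ℂ) : ℝ :=
  ‖Matrix.toEuclideanCLM (𝕜 := ℂ) X‖

def ptrace1 {n e : Type*} [Fintype n] (ρ : Matrix (n × e) (n × e) ℂ) : Matrix e e ℂ :=
  Matrix.of fun j j' => ∑ i, ρ (i, j) (i, j')

def IsAssemblage {d m o : ℕ} (M : Fin m → Fin o → Matrix (Fin d) (Fin d) ℂ) : Prop :=
  (∀ x a, (M x a).PosSemidef) ∧ ∀ x, ∑ a, M x a = 1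

def IsWeighting {m : ℕ} (p : Fin m → ℝ) : Prop :=
  (∀ x, 0 < p x) ∧ ∑ x, p x = 1

noncomputable def Ddiamond {d m o : ℕ} (p : Fin m → ℝ)
    (M N : Fin m → Fin o → Matrix (Fin d) (Fin d) ℂ) : ℝ :=
  (1 / 2) * ∑ x, p x *
    ⨆ ρ : {ρ : Matrix (Fin d × Fin d) (Fin d × Fin d) ℂ // IsDensityMatrix ρ},
      ∑ a, traceNorm (ptrace1 (((M x a - N x a) ⊗ₖ (1 : Matrix (Fin d) (Fin d) ℂ)) * ρ.1))

def JointlyMeasurable {d m o : ℕ} (F : Fin m → Fin o → Matrix (Fin d) (Fin d) ℂ) : Prop :=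
  ∃ G : (Fin m → Fin o) → Matrix (Fin d) (Fin d) ℂ,
    (∀ lam, (G lam).PosSemidef) ∧ (∑ lam, G lam = 1) ∧
    ∀ x a, F x a = ∑ lam ∈ Finset.univ.filter (fun lam => lam x = a), G lam

noncomputable def Incomp {d m o : ℕ} (p : Fin m → ℝ)
    (M : Fin m → Fin o → Matrix (Fin d) (Fin d) ℂ) : ℝ :=
  ⨅ F : {F : Fin m → Fin o → Matrix (Fin d) (Fin d) ℂ // IsAssemblage F ∧ JointlyMeasurable F},
    Ddiamond p M F.1


set_option linter.unusedSectionVars false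
set_option linter.unusedVariables false
set_option maxHeartbeats 1000000

namespace Matrix.PosSemidef

open scoped MatrixOrder

noncomputable def sqrt {n : Type*} [Fintype n] [DecidableEq n] {A : Matrix n n ℂ}
    (hA : A.PosSemidef) : Matrix n n ℂ :=
  (hA.1.eigenvectorUnitary : Matrix n n ℂ) *
    diagonal (((↑) : ℝ → ℂ) ∘ (√·) ∘ hA.1.eigenvalues) *
    (star hA.1.eigenvectorUnitary : Matrix n n ℂ)

lemma sqrt_eq_cfcSqrt {n : Type*} [Fintype n] [DecidableEq n] {A : Matrix n n ℂ}
    (hA : A.PosSemidef) : hA.sqrt = CFC.sqrt A := by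
  rw [CFC.sqrt_eq_cfc, cfc_nnreal_eq_real _ A hA.nonneg, hA.1.cfc_eq]
  simp only [IsHermitian.cfc, sqrt, Unitary.conjStarAlgAut_apply]
  congr 3
  funext i
  simp [Real.coe_sqrt, Real.coe_toNNReal', max_eq_left (hA.eigenvalues_nonneg i)]

lemma posSemidef_sqrt {n : Type*} [Fintype n] [DecidableEq n] {A : Matrix n n ℂ}
    (hA : A.PosSemidef) : hA.sqrt.PosSemidef := by
  rw [sqrt_eq_cfcSqrt]
  exact (CFC.sqrt_nonneg A).posSemidef

lemma sqrt_mul_self {n : Type*} [Fintype n] [DecidableEq n] {A : Matrix n n ℂ}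
    (hA : A.PosSemidef) : hA.sqrt * hA.sqrt = A := by
  rw [sqrt_eq_cfcSqrt]
  exact CFC.sqrt_mul_sqrt_self A hA.nonneg

lemma eq_sqrt_of_sq_eq {n : Type*} [Fintype n] [DecidableEq n] {P A : Matrix n n ℂ}
    (hP : P.PosSemidef) (hA : A.PosSemidef) (h : P ^ 2 = A) : P = hA.sqrt := by
  rw [sqrt_eq_cfcSqrt]
  exact (CFC.sqrt_unique (by rw [← sq]; exact h) hP.nonneg).symm

end Matrix.PosSemidef

namespace PfAux



variable {n : Type*} [Fintype n] [DecidableEq n]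

lemma psd_diag_nonneg {A : Matrix n n ℂ} (hA : A.PosSemidef) (i : n) : 0 ≤ A i i := by
  have h := hA.dotProduct_mulVec_nonneg (Pi.single i 1)
  simpa [dotProduct, Matrix.mulVec, Pi.single_apply, Finset.sum_ite_eq,
    Finset.mul_sum] using h

lemma psd_trace_re_nonneg {A : Matrix n n ℂ} (hA : A.PosSemidef) : 0 ≤ A.trace.re := by
  rw [Matrix.trace, Complex.re_sum]
  exact Finset.sum_nonneg fun i _ => (Complex.le_def.mp (psd_diag_nonneg hA i)).1

lemma psd_smul {A : Matrix n n ℂ} (hA : A.PosSemidef) {c : ℝ} (hc : 0 ≤ c) :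
    (c • A).PosSemidef := by
  refine Matrix.PosSemidef.of_dotProduct_mulVec_nonneg ?_ ?_
  · unfold Matrix.IsHermitian
    rw [Matrix.conjTranspose_smul, hA.1, star_trivial]
  · intro x
    have h := hA.dotProduct_mulVec_nonneg x
    have heq : star x ⬝ᵥ (c • A) *ᵥ x = c • (star x ⬝ᵥ A *ᵥ x) := by
      rw [Matrix.smul_mulVec, dotProduct_smul]
    rw [heq, Complex.le_def]
    rw [Complex.le_def] at h
    refine ⟨?_, ?_⟩
    · simp only [Complex.smul_re, Complex.zero_re] at h ⊢
      exact mul_nonneg hc h.1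
    · simp only [Complex.smul_im, Complex.zero_im] at h ⊢
      rw [← h.2, smul_zero]

lemma traceNorm_nonneg (X : Matrix n n ℂ) : 0 ≤ traceNorm X :=
  psd_trace_re_nonneg (Matrix.posSemidef_conjTranspose_mul_self X).posSemidef_sqrt

lemma sqrt_unique {S P : Matrix n n ℂ} (hS : S.PosSemidef) (hP : P.PosSemidef)
    (h : P * P = S) : hS.sqrt = P :=
  (hP.eq_sqrt_of_sq_eq hS (by rw [pow_two, h])).symm

lemma traceNorm_eq_of_polar {X P : Matrix n n ℂ} (hP : P.PosSemidef) (h : Xᴴ * X = P * P) :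
    traceNorm X = P.trace.re := by
  show (Matrix.posSemidef_conjTranspose_mul_self X).sqrt.trace.re = _
  rw [sqrt_unique (Matrix.posSemidef_conjTranspose_mul_self X) hP h.symm]

lemma traceNorm_zero : traceNorm (0 : Matrix n n ℂ) = 0 := by
  rw [traceNorm_eq_of_polar Matrix.PosSemidef.zero (by simp)]
  simp

lemma traceNorm_smul (X : Matrix n n ℂ) {c : ℝ} (hc : 0 ≤ c) :
    traceNorm (c • X) = c * traceNorm X := by
  set hS := Matrix.posSemidef_conjTranspose_mul_self X
  have hP : (c • hS.sqrt).PosSemidef := psd_smul hS.posSemidef_sqrt hc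
  have key : (c • X)ᴴ * (c • X) = (c • hS.sqrt) * (c • hS.sqrt) := by
    rw [Matrix.conjTranspose_smul, star_trivial, Matrix.smul_mul, Matrix.mul_smul,
      Matrix.smul_mul, Matrix.mul_smul, hS.sqrt_mul_self]
  rw [traceNorm_eq_of_polar hP key, Matrix.trace_smul, Complex.smul_re]
  rfl


variable {n : Type*} [Fintype n] [DecidableEq n]

instance : FirstCountableTopology (Matrix n n ℂ) :=
  inferInstanceAs (FirstCountableTopology (n → n → ℂ))

lemma exists_polar_of_isUnit {X : Matrix n n ℂ} (hX : IsUnit X.det) :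
    ∃ U : Matrix n n ℂ, Uᴴ * U = 1 ∧
      ∃ P : Matrix n n ℂ, P.PosSemidef ∧ Xᴴ * X = P * P ∧ X = U * P := by
  set S := Xᴴ * X with hSdef
  have hS : S.PosSemidef := Matrix.posSemidef_conjTranspose_mul_self X
  set P := hS.sqrt with hPdef
  have hP : P.PosSemidef := hS.posSemidef_sqrt
  have hPP : P * P = S := hS.sqrt_mul_self
  have hdetS : IsUnit S.det := by
    rw [hSdef, Matrix.det_mul, Matrix.det_conjTranspose]
    exact hX.star.mul hX
  have hdetP : IsUnit P.det := by
    have h2 : P.det * P.det = S.det := by rw [← Matrix.det_mul, hPP]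
    exact isUnit_of_mul_isUnit_left (h2 ▸ hdetS)
  refine ⟨X * P⁻¹, ?_, P, hP, hPP.symm, ?_⟩
  · rw [Matrix.conjTranspose_mul, Matrix.conjTranspose_nonsing_inv, hP.1,
      Matrix.mul_assoc, ← Matrix.mul_assoc Xᴴ, ← hSdef, ← hPP,
      ← Matrix.mul_assoc, ← Matrix.mul_assoc P⁻¹ P P, Matrix.nonsing_inv_mul _ hdetP,
      Matrix.one_mul, Matrix.mul_nonsing_inv _ hdetP]
  · rw [Matrix.mul_assoc, Matrix.nonsing_inv_mul _ hdetP, Matrix.mul_one]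

lemma exists_polar (X : Matrix n n ℂ) :
    ∃ U : Matrix n n ℂ, Uᴴ * U = 1 ∧
      X = U * (Matrix.posSemidef_conjTranspose_mul_self X).sqrt := by
  -- choose a sequence of invertible perturbations
  have hspec : (spectrum ℂ X).Finite := X.finite_spectrum
  have hbadfin : {t : ℝ | (-(t:ℂ)) ∈ spectrum ℂ X}.Finite := by
    have : {t : ℝ | (-(t:ℂ)) ∈ spectrum ℂ X} ⊆
        (fun t : ℝ => (-(t:ℂ))) ⁻¹' (spectrum ℂ X) := fun t ht => ht
    refine Set.Finite.subset (Set.Finite.preimage ?_ hspec) this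
    intro a _ b _ h
    simpa using h
  have hseq : ∀ k : ℕ, ∃ t : ℝ, 0 < t ∧ t < 1/(k+1) ∧ IsUnit (X + (t:ℂ) • 1).det := by
    intro k
    have hioo : (Set.Ioo (0:ℝ) (1/(k+1))).Infinite := Set.Ioo_infinite (by positivity)
    obtain ⟨t, ht⟩ := (hioo.diff hbadfin).nonempty
    refine ⟨t, ht.1.1, ht.1.2, ?_⟩
    have hmem : (-(t:ℂ)) ∉ spectrum ℂ X := ht.2
    rw [spectrum.mem_iff, not_not] at hmem
    have : X + (t:ℂ) • 1 = -((algebraMap ℂ (Matrix n n ℂ)) (-(t:ℂ)) - X) := by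
      rw [Algebra.algebraMap_eq_smul_one]
      simp [neg_smul]
    rw [← Matrix.isUnit_iff_isUnit_det, this]
    exact hmem.neg
  choose t ht0 ht1 htu using hseq
  have htend : Filter.Tendsto t Filter.atTop (nhds 0) := by
    refine squeeze_zero (fun k => (ht0 k).le) (fun k => (ht1 k).le) ?_
    exact tendsto_one_div_add_atTop_nhds_zero_nat
  set Xk : ℕ → Matrix n n ℂ := fun k => X + (t k : ℂ) • 1 with hXkdef
  have hXktend : Filter.Tendsto Xk Filter.atTop (nhds X) := by
    have hcont : Continuous (fun s : ℝ => X + (s:ℂ) • (1 : Matrix n n ℂ)) := by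
      exact continuous_const.add ((Complex.continuous_ofReal).smul continuous_const)
    have := (hcont.tendsto 0).comp htend
    have h0 : X + ((0:ℝ):ℂ) • (1 : Matrix n n ℂ) = X := by simp
    rw [h0] at this
    exact this
  choose U hU P hPpsd hPsq hXUP using fun k => exists_polar_of_isUnit (htu k)
  -- compactness of the unitary set
  set K : Set (Matrix n n ℂ) := {U : Matrix n n ℂ | Uᴴ * U = 1} with hKdef
  have hKclosed : IsClosed K := by
    have : Continuous fun U : Matrix n n ℂ => Uᴴ * U :=
      (continuous_id.matrix_conjTranspose).matrix_mul continuous_id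
    exact isClosed_eq this continuous_const
  have hKsub : K ⊆ (Set.univ.pi fun _ : n => Set.univ.pi fun _ : n =>
      Metric.closedBall (0:ℂ) 1) := by
    intro W hW
    intro i _ j _
    have hdiag : (Wᴴ * W) j j = 1 := by rw [hW]; simp [Matrix.one_apply]
    have hsum : ∑ k, Complex.normSq (W k j) = 1 := by
      have : (Wᴴ * W) j j = ∑ k, (starRingEnd ℂ) (W k j) * W k j := by
        simp [Matrix.mul_apply, Matrix.conjTranspose_apply]
      rw [this] at hdiag
      have := congrArg Complex.re hdiag
      rw [Complex.re_sum] at this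
      simpa [Complex.normSq_eq_conj_mul_self, Complex.normSq_apply] using this
    have h1 : Complex.normSq (W i j) ≤ 1 := by
      rw [← hsum]
      exact Finset.single_le_sum (f := fun k => Complex.normSq (W k j))
        (fun k _ => Complex.normSq_nonneg _) (Finset.mem_univ i)
    rw [Metric.mem_closedBall, dist_zero_right]
    have : ‖W i j‖^2 ≤ 1 := by rwa [← Complex.sq_norm] at h1
    nlinarith [norm_nonneg (W i j)]
  have hKcomp : IsCompact K := by
    refine IsCompact.of_isClosed_subset ?_ hKclosed hKsub
    exact isCompact_univ_pi fun _ => isCompact_univ_pi fun _ =>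
      ProperSpace.isCompact_closedBall 0 1
  obtain ⟨V, hVK, φ, hφ, hVtend⟩ := hKcomp.tendsto_subseq (fun k => hU k)
  -- limit of P's
  have hPk_eq : ∀ k, P k = (U k)ᴴ * Xk k := by
    intro k
    show P k = (U k)ᴴ * (X + (t k : ℂ) • 1)
    rw [hXUP k, ← Matrix.mul_assoc, hU k, Matrix.one_mul]
  have hPtend : Filter.Tendsto (fun k => P (φ k)) Filter.atTop (nhds (Vᴴ * X)) := by
    have hpair : Filter.Tendsto (fun k => (U (φ k), Xk (φ k))) Filter.atTop
        (nhds (V, X)) := hVtend.prodMk_nhds (hXktend.comp hφ.tendsto_atTop)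
    have hcont : Continuous fun p : Matrix n n ℂ × Matrix n n ℂ => p.1ᴴ * p.2 :=
      (continuous_fst.matrix_conjTranspose).matrix_mul continuous_snd
    have := (hcont.tendsto (V, X)).comp hpair
    simp only [Function.comp] at this
    convert this using 2
    exact hPk_eq _
  set Q := Vᴴ * X with hQdef
  have hQpsd : Q.PosSemidef := by
    refine Matrix.PosSemidef.of_dotProduct_mulVec_nonneg ?_ ?_
    · have htendH : Filter.Tendsto (fun k => (P (φ k))ᴴ) Filter.atTop (nhds Qᴴ) := by
        have hcont : Continuous fun M : Matrix n n ℂ => Mᴴ :=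
          continuous_id.matrix_conjTranspose
        exact (hcont.tendsto Q).comp hPtend
      have heq : (fun k => (P (φ k))ᴴ) = fun k => P (φ k) := by
        funext k; exact (hPpsd (φ k)).1
      rw [heq] at htendH
      exact tendsto_nhds_unique htendH hPtend
    · intro x
      have hcont : Continuous fun M : Matrix n n ℂ => star x ⬝ᵥ M *ᵥ x :=
        (continuous_const.dotProduct (continuous_id.matrix_mulVec continuous_const))
      have htendq : Filter.Tendsto (fun k => star x ⬝ᵥ (P (φ k)) *ᵥ x) Filter.atTop
          (nhds (star x ⬝ᵥ Q *ᵥ x)) := (hcont.tendsto Q).comp hPtend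
      have hnn : ∀ k, 0 ≤ star x ⬝ᵥ (P (φ k)) *ᵥ x := fun k => (hPpsd (φ k)).dotProduct_mulVec_nonneg x
      rw [Complex.le_def]
      constructor
      · have hre := (Complex.continuous_re.tendsto _).comp htendq
        refine ge_of_tendsto hre (Filter.Eventually.of_forall fun k => ?_)
        exact (Complex.le_def.mp (hnn k)).1
      · have him := (Complex.continuous_im.tendsto _).comp htendq
        have : ∀ k, (star x ⬝ᵥ (P (φ k)) *ᵥ x).im = 0 := fun k =>
          ((Complex.le_def.mp (hnn k)).2).symm
        simp only [Function.comp_def, this] at him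
        exact (tendsto_nhds_unique him tendsto_const_nhds).symm
  have hVV : V * Vᴴ = 1 := mul_eq_one_comm.mp hVK
  have hQQ : Q * Q = Xᴴ * X := by
    nth_rewrite 1 [← hQpsd.1]
    rw [hQdef, Matrix.conjTranspose_mul, Matrix.conjTranspose_conjTranspose,
      Matrix.mul_assoc, ← Matrix.mul_assoc V Vᴴ X, hVV, Matrix.one_mul]
  refine ⟨V, hVK, ?_⟩
  have hsq : (Matrix.posSemidef_conjTranspose_mul_self X).sqrt = Q :=
    (hQpsd.eq_sqrt_of_sq_eq _ (by rw [pow_two, hQQ])).symm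
  rw [hsq, hQdef, ← Matrix.mul_assoc, hVV, Matrix.one_mul]




lemma re_conj_mul (z : ℂ) : ((starRingEnd ℂ) z * z).re = ‖z‖^2 := by
  rw [Complex.sq_norm, Complex.normSq_apply]
  simp [Complex.mul_re]

lemma re_star_dot (w : n → ℂ) : (star w ⬝ᵥ w).re = ∑ j, ‖w j‖^2 := by
  rw [dotProduct, Complex.re_sum]
  exact Finset.sum_congr rfl fun j _ => re_conj_mul (w j)

lemma norm_mulVec_sq {Q : Matrix n n ℂ} (hQ : Qᴴ * Q = 1) (v : n → ℂ) :
    ∑ j, ‖(Q *ᵥ v) j‖^2 = ∑ j, ‖v j‖^2 := by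
  rw [← re_star_dot, ← re_star_dot]
  congr 1
  rw [Matrix.star_mulVec, Matrix.dotProduct_mulVec, Matrix.vecMul_vecMul, hQ,
    Matrix.vecMul_one]

lemma re_dot_le (a b : n → ℂ) :
    (star a ⬝ᵥ b).re ≤ Real.sqrt (∑ j, ‖a j‖^2) * Real.sqrt (∑ j, ‖b j‖^2) := by
  rw [dotProduct, Complex.re_sum]
  calc ∑ j, (star a j * b j).re ≤ ∑ j, ‖a j‖ * ‖b j‖ := by
        refine Finset.sum_le_sum fun j _ => (Complex.re_le_norm _).trans ?_
        rw [norm_mul, Pi.star_apply, norm_star]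
    _ ≤ _ := Real.sum_mul_le_sqrt_mul_sqrt _ _ _

lemma re_trace_mul_le (W X : Matrix n n ℂ) (hW : Wᴴ * W = 1) :
    ((W * X).trace).re ≤ traceNorm X := by
  obtain ⟨U, hU, hXU⟩ := exists_polar X
  set P := (Matrix.posSemidef_conjTranspose_mul_self X).sqrt with hPdef
  have hPpsd : P.PosSemidef := (Matrix.posSemidef_conjTranspose_mul_self X).posSemidef_sqrt
  set R := hPpsd.sqrt with hRdef
  have hRpsd : R.PosSemidef := hPpsd.posSemidef_sqrt
  have hRR : R * R = P := hPpsd.sqrt_mul_self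
  have hsymm : ∀ a b, R a b = star (R b a) := fun a b => (Matrix.IsHermitian.apply hRpsd.1 a b).symm
  set Q := W * U with hQdef
  have hQ : Qᴴ * Q = 1 := by
    rw [hQdef, Matrix.conjTranspose_mul, Matrix.mul_assoc, ← Matrix.mul_assoc Wᴴ W U,
      hW, Matrix.one_mul, hU]
  have h1 : W * X = Q * (R * R) := by rw [hXU, ← Matrix.mul_assoc, hRR]
  have h2 : (W * X).trace = (R * Q * R).trace := by
    rw [h1, ← Matrix.mul_assoc, Matrix.trace_mul_comm, ← Matrix.mul_assoc]
  have h3 : ∀ i, (R * Q * R) i i = star (fun j => R j i) ⬝ᵥ (Q *ᵥ fun j => R j i) := by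
    intro i
    simp only [Matrix.mul_apply, dotProduct, Matrix.mulVec, Pi.star_apply,
      Finset.sum_mul, Finset.mul_sum]
    rw [Finset.sum_comm]
    refine Finset.sum_congr rfl fun j _ => Finset.sum_congr rfl fun k _ => ?_
    rw [← hsymm i j]
    ring
  have h4 : P.trace.re = ∑ i, ∑ j, ‖R j i‖^2 := by
    rw [← hRR, Matrix.trace, Complex.re_sum]
    refine Finset.sum_congr rfl fun i _ => ?_
    rw [Matrix.diag_apply, Matrix.mul_apply, Complex.re_sum]
    refine Finset.sum_congr rfl fun j _ => ?_
    rw [hsymm i j, ← re_conj_mul (R j i)]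
    rfl
  have hTN : traceNorm X = P.trace.re := rfl
  rw [h2, Matrix.trace, Complex.re_sum, hTN, h4]
  refine Finset.sum_le_sum fun i _ => ?_
  rw [Matrix.diag_apply, h3 i]
  refine (re_dot_le _ _).trans ?_
  rw [norm_mulVec_sq hQ, Real.mul_self_sqrt (Finset.sum_nonneg fun j _ => sq_nonneg _)]

lemma exists_unitary_traceNorm (X : Matrix n n ℂ) :
    ∃ W : Matrix n n ℂ, Wᴴ * W = 1 ∧ ((W * X).trace).re = traceNorm X := by
  obtain ⟨U, hU, hXU⟩ := exists_polar X
  refine ⟨Uᴴ, by rw [Matrix.conjTranspose_conjTranspose]; exact mul_eq_one_comm.mp hU, ?_⟩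
  conv_lhs => rw [hXU]
  rw [← Matrix.mul_assoc, hU, Matrix.one_mul]
  rfl

lemma traceNorm_add_le (X Y : Matrix n n ℂ) :
    traceNorm (X + Y) ≤ traceNorm X + traceNorm Y := by
  obtain ⟨W, hW, hTr⟩ := exists_unitary_traceNorm (X + Y)
  rw [← hTr, Matrix.mul_add, Matrix.trace_add]
  rw [Complex.add_re]
  exact add_le_add (re_trace_mul_le W X hW) (re_trace_mul_le W Y hW)

lemma traceNorm_sum_le {ι : Type*} (s : Finset ι) (f : ι → Matrix n n ℂ) :
    traceNorm (∑ i ∈ s, f i) ≤ ∑ i ∈ s, traceNorm (f i) := by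
  classical
  induction s using Finset.induction_on with
  | empty => simp [traceNorm_zero]
  | insert _ _ h ih =>
    rw [Finset.sum_insert h, Finset.sum_insert h]
    exact (traceNorm_add_le _ _).trans (by linarith)

lemma traceNorm_le_sum_norm (X : Matrix n n ℂ) :
    traceNorm X ≤ ∑ i, ∑ j, ‖X i j‖ := by
  obtain ⟨W, hW, hTr⟩ := exists_unitary_traceNorm X
  have hWentry : ∀ i j, ‖W i j‖ ≤ 1 := by
    intro i j
    have hdiag : (Wᴴ * W) j j = 1 := by rw [hW]; simp [Matrix.one_apply]
    have : (Wᴴ * W) j j = ∑ k, (starRingEnd ℂ) (W k j) * W k j := by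
      simp [Matrix.mul_apply, Matrix.conjTranspose_apply]
    rw [this] at hdiag
    have h2 := congrArg Complex.re hdiag
    rw [Complex.re_sum] at h2
    simp only [re_conj_mul] at h2
    have h3 : ‖W i j‖^2 ≤ 1 := by
      rw [show (1:ℝ) = ∑ k, ‖W k j‖^2 by rw [h2]; simp]
      exact Finset.single_le_sum (f := fun k => ‖W k j‖^2)
        (fun k _ => sq_nonneg _) (Finset.mem_univ i)
    nlinarith [norm_nonneg (W i j)]
  rw [← hTr, Matrix.trace, Complex.re_sum]
  calc ∑ i, ((W * X).diag i).re ≤ ∑ i, ∑ j, ‖X j i‖ := by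
        refine Finset.sum_le_sum fun i _ => ?_
        rw [Matrix.diag_apply, Matrix.mul_apply, Complex.re_sum]
        refine (Finset.sum_le_sum fun j _ => (Complex.re_le_norm _).trans ?_).trans le_rfl
        rw [norm_mul]
        calc ‖W i j‖ * ‖X j i‖ ≤ 1 * ‖X j i‖ :=
              mul_le_mul_of_nonneg_right (hWentry i j) (norm_nonneg _)
          _ = ‖X j i‖ := one_mul _
    _ = ∑ i, ∑ j, ‖X i j‖ := Finset.sum_comm


section Density
variable {n : Type*} [Fintype n] [DecidableEq n]

lemma density_diag_le_one {ρ : Matrix n n ℂ} (hρ : IsDensityMatrix ρ) (u : n) :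
    (ρ u u).re ≤ 1 := by
  have htr : ∑ i, (ρ i i).re = 1 := by
    have := congrArg Complex.re hρ.2
    rwa [Matrix.trace, Complex.re_sum] at this
  rw [← htr]
  exact Finset.single_le_sum (f := fun i => (ρ i i).re)
    (fun i _ => (Complex.le_def.mp (psd_diag_nonneg hρ.1 i)).1) (Finset.mem_univ u)

lemma density_entry_le_one {ρ : Matrix n n ℂ} (hρ : IsDensityMatrix ρ) (u v : n) :
    ‖ρ u v‖ ≤ 1 := by
  obtain ⟨B, hB⟩ : ∃ B : Matrix n n ℂ, ρ = Bᴴ * B := by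
    open scoped MatrixOrder in exact CStarAlgebra.nonneg_iff_eq_star_mul_self.mp hρ.1.nonneg
  have hentry : ∀ a b : n, ρ a b = ∑ k, (starRingEnd ℂ) (B k a) * B k b := by
    intro a b
    rw [hB]
    simp [Matrix.mul_apply, Matrix.conjTranspose_apply]
  have hdiag : ∀ a : n, (ρ a a).re = ∑ k, ‖B k a‖^2 := by
    intro a
    rw [hentry a a, Complex.re_sum]
    exact Finset.sum_congr rfl fun k _ => re_conj_mul (B k a)
  calc ‖ρ u v‖ ≤ ∑ k, ‖B k u‖ * ‖B k v‖ := by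
        rw [hentry u v]
        refine (norm_sum_le _ _).trans (Finset.sum_le_sum fun k _ => ?_)
        rw [norm_mul, Complex.norm_conj]
    _ ≤ Real.sqrt (∑ k, ‖B k u‖^2) * Real.sqrt (∑ k, ‖B k v‖^2) :=
        Real.sum_mul_le_sqrt_mul_sqrt _ _ _
    _ ≤ 1 * 1 := by
        apply mul_le_mul ?_ ?_ (Real.sqrt_nonneg _) zero_le_one
        · rw [show (1:ℝ) = Real.sqrt 1 by simp]
          exact Real.sqrt_le_sqrt (by rw [← hdiag]; exact density_diag_le_one hρ u)
        · rw [show (1:ℝ) = Real.sqrt 1 by simp]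
          exact Real.sqrt_le_sqrt (by rw [← hdiag]; exact density_diag_le_one hρ v)
    _ = 1 := one_mul 1

end Density

section Ptrace
variable {n e : Type*} [Fintype n] [Fintype e] [DecidableEq n] [DecidableEq e]

lemma ptrace1_sum {ι : Type*} (s : Finset ι) (f : ι → Matrix (n × e) (n × e) ℂ) :
    ptrace1 (∑ i ∈ s, f i) = ∑ i ∈ s, ptrace1 (f i) := by
  ext j j'
  simp only [ptrace1, Matrix.of_apply, Matrix.sum_apply]
  exact Finset.sum_comm

lemma ptrace1_smul (c : ℝ) (ρ : Matrix (n × e) (n × e) ℂ) :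
    ptrace1 (c • ρ) = c • ptrace1 ρ := by
  ext j j'
  simp only [ptrace1, Matrix.of_apply, Matrix.smul_apply]
  rw [Finset.smul_sum]

lemma traceNorm_ptrace1_mul_le (A : Matrix (n × e) (n × e) ℂ)
    {ρ : Matrix (n × e) (n × e) ℂ} (hρ : IsDensityMatrix ρ) :
    traceNorm (ptrace1 (A * ρ)) ≤ ∑ j : e, ∑ j' : e, ∑ i : n, ∑ w : n × e, ‖A (i, j) w‖ := by
  refine (traceNorm_le_sum_norm _).trans ?_
  refine Finset.sum_le_sum fun j _ => Finset.sum_le_sum fun j' _ => ?_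
  show ‖ptrace1 (A * ρ) j j'‖ ≤ _
  calc ‖ptrace1 (A * ρ) j j'‖ ≤ ∑ i, ‖(A * ρ) (i, j) (i, j')‖ := by
        simp only [ptrace1, Matrix.of_apply]
        exact norm_sum_le _ _
    _ ≤ ∑ i, ∑ w, ‖A (i, j) w‖ := by
        refine Finset.sum_le_sum fun i _ => ?_
        rw [Matrix.mul_apply]
        refine (norm_sum_le _ _).trans (Finset.sum_le_sum fun w _ => ?_)
        rw [norm_mul]
        calc ‖A (i, j) w‖ * ‖ρ w (i, j')‖ ≤ ‖A (i, j) w‖ * 1 :=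
              mul_le_mul_of_nonneg_left (density_entry_le_one hρ w (i, j')) (norm_nonneg _)
          _ = ‖A (i, j) w‖ := mul_one _

end Ptrace

lemma sum_kron {n : Type*} [Fintype n] [DecidableEq n] {ι : Type*} (s : Finset ι)
    (f : ι → Matrix n n ℂ) (B : Matrix n n ℂ) :
    (∑ i ∈ s, f i) ⊗ₖ B = ∑ i ∈ s, (f i) ⊗ₖ B := by
  classical
  induction s using Finset.induction_on with
  | empty => simp [Matrix.zero_kronecker]
  | insert _ _ h ih => rw [Finset.sum_insert h, Finset.sum_insert h, Matrix.add_kronecker, ih]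

lemma bdd_range {d o : ℕ} (Δ : Fin o → Matrix (Fin d) (Fin d) ℂ) :
    BddAbove (Set.range fun ρ : {ρ : Matrix (Fin d × Fin d) (Fin d × Fin d) ℂ // IsDensityMatrix ρ} =>
      ∑ a, traceNorm (ptrace1 ((Δ a ⊗ₖ (1 : Matrix (Fin d) (Fin d) ℂ)) * ρ.1))) := by
  refine ⟨∑ a : Fin o, ∑ j : Fin d, ∑ j' : Fin d, ∑ i : Fin d, ∑ w : Fin d × Fin d, ‖(Δ a ⊗ₖ (1 : Matrix (Fin d) (Fin d) ℂ)) (i, j) w‖, ?_⟩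
  rintro x ⟨ρ, rfl⟩
  exact Finset.sum_le_sum fun a _ => traceNorm_ptrace1_mul_le _ ρ.2


lemma psd_sum {n : Type*} [Fintype n] [DecidableEq n] {ι : Type*} (s : Finset ι)
    (f : ι → Matrix n n ℂ) (h : ∀ i ∈ s, (f i).PosSemidef) : (∑ i ∈ s, f i).PosSemidef :=
  Finset.sum_induction f _ (fun _ _ ha hb => ha.add hb) Matrix.PosSemidef.zero h

end PfAux

open PfAux in
/-- Monotonicity of the weighted diamond distance under classical simulations
(mixtures of settings and classical post-processing of outcomes). -/
theorem diamond_distance_monotone_under_simulation {d m m' o o' : ℕ}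
    (M N : Fin m → Fin o → Matrix (Fin d) (Fin d) ℂ)
    (hM : IsAssemblage M) (hN : IsAssemblage N)
    (p : Fin m → ℝ) (hp : IsWeighting p)
    (q : Fin m' → ℝ) (hq0 : ∀ y, 0 ≤ q y) (hq1 : ∑ y, q y = 1)
    (pc : Fin m' → Fin m → ℝ) (hpc0 : ∀ y x, 0 ≤ pc y x) (hpc1 : ∀ y, ∑ x, pc y x = 1)
    (r : Fin m' → Fin m → Fin o → Fin o' → ℝ)
    (hr0 : ∀ y x a b, 0 ≤ r y x a b) (hr1 : ∀ y x a, ∑ b, r y x a b = 1)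
    (hcomp : ∀ x, ∑ y, q y * pc y x = p x) :
    IsAssemblage (fun y b => ∑ x, ∑ a, (pc y x * r y x a b) • M x a) ∧
    IsAssemblage (fun y b => ∑ x, ∑ a, (pc y x * r y x a b) • N x a) ∧
    Ddiamond q (fun y b => ∑ x, ∑ a, (pc y x * r y x a b) • M x a)
               (fun y b => ∑ x, ∑ a, (pc y x * r y x a b) • N x a)
      ≤ Ddiamond p M N := by
  have hassem : ∀ (K : Fin m → Fin o → Matrix (Fin d) (Fin d) ℂ), IsAssemblage K →
      IsAssemblage (fun y b => ∑ x, ∑ a, (pc y x * r y x a b) • K x a) := by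
    intro K hK
    constructor
    · intro y b
      refine psd_sum _ _ fun x _ => psd_sum _ _ fun a _ => ?_
      exact psd_smul (hK.1 x a) (mul_nonneg (hpc0 y x) (hr0 y x a b))
    · intro y
      rw [Finset.sum_comm]
      have hx : ∀ x : Fin m, (∑ b, ∑ a, (pc y x * r y x a b) • K x a)
          = pc y x • (1 : Matrix (Fin d) (Fin d) ℂ) := by
        intro x
        rw [Finset.sum_comm]
        calc ∑ a, ∑ b, (pc y x * r y x a b) • K x a
            = ∑ a, pc y x • K x a := by
              refine Finset.sum_congr rfl fun a _ => ?_
              rw [← Finset.sum_smul, ← Finset.mul_sum, hr1 y x a, mul_one]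
          _ = pc y x • ∑ a, K x a := by rw [Finset.smul_sum]
          _ = pc y x • (1 : Matrix (Fin d) (Fin d) ℂ) := by rw [hK.2 x]
      rw [Finset.sum_congr rfl fun x _ => hx x, ← Finset.sum_smul, hpc1 y, one_smul]
  refine ⟨hassem M hM, hassem N hN, ?_⟩
  -- the distance inequality
  unfold Ddiamond
  have hg0 : ∀ x : Fin m, 0 ≤
      ⨆ ρ : {ρ : Matrix (Fin d × Fin d) (Fin d × Fin d) ℂ // IsDensityMatrix ρ},
        ∑ a, traceNorm (ptrace1 (((M x a - N x a) ⊗ₖ (1 : Matrix (Fin d) (Fin d) ℂ)) * ρ.1)) :=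
    fun x => Real.iSup_nonneg fun ρ => Finset.sum_nonneg fun a _ => traceNorm_nonneg _
  refine mul_le_mul_of_nonneg_left ?_ (by norm_num)
  calc ∑ y, q y * ⨆ ρ : {ρ : Matrix (Fin d × Fin d) (Fin d × Fin d) ℂ // IsDensityMatrix ρ},
        ∑ b, traceNorm (ptrace1 ((((∑ x, ∑ a, (pc y x * r y x a b) • M x a) -
          (∑ x, ∑ a, (pc y x * r y x a b) • N x a)) ⊗ₖ (1 : Matrix (Fin d) (Fin d) ℂ)) * ρ.1))
      ≤ ∑ y, q y * ∑ x, pc y x *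
          (⨆ ρ : {ρ : Matrix (Fin d × Fin d) (Fin d × Fin d) ℂ // IsDensityMatrix ρ},
            ∑ a, traceNorm (ptrace1 (((M x a - N x a) ⊗ₖ (1 : Matrix (Fin d) (Fin d) ℂ)) * ρ.1))) := by
        refine Finset.sum_le_sum fun y _ => mul_le_mul_of_nonneg_left ?_ (hq0 y)
        refine Real.iSup_le (fun ρ => ?_)
          (Finset.sum_nonneg fun x _ => mul_nonneg (hpc0 y x) (hg0 x))
        -- bound for a fixed density matrix ρ
        calc ∑ b, traceNorm (ptrace1 ((((∑ x, ∑ a, (pc y x * r y x a b) • M x a) -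
              (∑ x, ∑ a, (pc y x * r y x a b) • N x a)) ⊗ₖ (1 : Matrix (Fin d) (Fin d) ℂ)) * ρ.1))
            = ∑ b, traceNorm (∑ x, ∑ a, (pc y x * r y x a b) •
                ptrace1 (((M x a - N x a) ⊗ₖ (1 : Matrix (Fin d) (Fin d) ℂ)) * ρ.1)) := by
              refine Finset.sum_congr rfl fun b _ => ?_
              congr 1
              rw [← Finset.sum_sub_distrib]
              simp_rw [← Finset.sum_sub_distrib, ← smul_sub]
              rw [sum_kron, Finset.sum_mul, ptrace1_sum]
              refine Finset.sum_congr rfl fun x _ => ?_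
              rw [sum_kron, Finset.sum_mul, ptrace1_sum]
              refine Finset.sum_congr rfl fun a _ => ?_
              rw [Matrix.smul_kronecker, Matrix.smul_mul, ptrace1_smul]
          _ ≤ ∑ b, ∑ x, ∑ a, (pc y x * r y x a b) *
                traceNorm (ptrace1 (((M x a - N x a) ⊗ₖ (1 : Matrix (Fin d) (Fin d) ℂ)) * ρ.1)) := by
              refine Finset.sum_le_sum fun b _ => ?_
              refine (traceNorm_sum_le _ _).trans (Finset.sum_le_sum fun x _ => ?_)
              refine (traceNorm_sum_le _ _).trans (Finset.sum_le_sum fun a _ => ?_)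
              rw [traceNorm_smul _ (mul_nonneg (hpc0 y x) (hr0 y x a b))]
          _ = ∑ x, pc y x * ∑ a,
                traceNorm (ptrace1 (((M x a - N x a) ⊗ₖ (1 : Matrix (Fin d) (Fin d) ℂ)) * ρ.1)) := by
              rw [Finset.sum_comm]
              refine Finset.sum_congr rfl fun x _ => ?_
              rw [Finset.mul_sum, Finset.sum_comm]
              refine Finset.sum_congr rfl fun a _ => ?_
              rw [← Finset.sum_mul, ← Finset.mul_sum, hr1 y x a, mul_one]
          _ ≤ ∑ x, pc y x *
              (⨆ ρ' : {ρ : Matrix (Fin d × Fin d) (Fin d × Fin d) ℂ // IsDensityMatrix ρ},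
                ∑ a, traceNorm (ptrace1 (((M x a - N x a) ⊗ₖ (1 : Matrix (Fin d) (Fin d) ℂ)) * ρ'.1))) := by
              refine Finset.sum_le_sum fun x _ => mul_le_mul_of_nonneg_left ?_ (hpc0 y x)
              exact le_ciSup (bdd_range fun a => M x a - N x a) ρ
    _ = ∑ x, p x * (⨆ ρ : {ρ : Matrix (Fin d × Fin d) (Fin d × Fin d) ℂ // IsDensityMatrix ρ},
          ∑ a, traceNorm (ptrace1 (((M x a - N x a) ⊗ₖ (1 : Matrix (Fin d) (Fin d) ℂ)) * ρ.1))) := by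
        simp_rw [Finset.mul_sum]
        rw [Finset.sum_comm]
        refine Finset.sum_congr rfl fun x _ => ?_
        rw [← hcomp x, Finset.sum_mul]
        exact Finset.sum_congr rfl fun y _ => by ring

end
end

section
/- Let σ be a state assemblage in dimension d with m settings and o outcomes and weighting pA, and let N be a measurement assemblage in dimension d with m' settings, o' outcomes and weighting pB. Define the behavior q x y a b = Re (Tr (N y b * σ x a)). Then the nonlocality of q with weights p(x,y) = pA x · pB y is bounded by the steerability of σ: N(q) ≤ S(σ,pA). -/
open Matrix Kronecker BigOperators ComplexOrder

noncomputable section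

def IsStateAssemblage {d m o : ℕ} (σ : Fin m → Fin o → Matrix (Fin d) (Fin d) ℂ) : Prop :=
  (∀ x a, (σ x a).PosSemidef) ∧ ∀ x, ∑ a, (σ x a).trace = 1

def HasLHSModel {d m o : ℕ} (σ : Fin m → Fin o → Matrix (Fin d) (Fin d) ℂ) : Prop :=
  ∃ σ' : (Fin m → Fin o) → Matrix (Fin d) (Fin d) ℂ,
    (∀ lam, (σ' lam).PosSemidef) ∧ (∑ lam, (σ' lam).trace = 1) ∧
    ∀ x a, σ x a = ∑ lam ∈ Finset.univ.filter (fun lam => lam x = a), σ' lam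

noncomputable def Steerability {d m o : ℕ} (p : Fin m → ℝ)
    (σ : Fin m → Fin o → Matrix (Fin d) (Fin d) ℂ) : ℝ :=
  ⨅ τ : {τ : Fin m → Fin o → Matrix (Fin d) (Fin d) ℂ // IsStateAssemblage τ ∧ HasLHSModel τ},
    (1 / 2) * ∑ x, p x * ∑ a, traceNorm (σ x a - τ.1 x a)

def IsLocalBehavior {m m' o o' : ℕ} (t : Fin m → Fin m' → Fin o → Fin o' → ℝ) : Prop :=
  ∃ π : (Fin m → Fin o) × (Fin m' → Fin o') → ℝ,
    (∀ lam, 0 ≤ π lam) ∧ (∑ lam, π lam = 1) ∧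
    ∀ x y a b, t x y a b =
      ∑ lam ∈ Finset.univ.filter
        (fun lam : (Fin m → Fin o) × (Fin m' → Fin o') => lam.1 x = a ∧ lam.2 y = b), π lam

noncomputable def Nonlocality {m m' o o' : ℕ} (pA : Fin m → ℝ) (pB : Fin m' → ℝ)
    (q : Fin m → Fin m' → Fin o → Fin o' → ℝ) : ℝ :=
  ⨅ t : {t : Fin m → Fin m' → Fin o → Fin o' → ℝ // IsLocalBehavior t},
    (1 / 2) * ∑ x, ∑ y, ∑ a, ∑ b, pA x * pB y * |q x y a b - t.1 x y a b|

section Helpers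
set_option linter.unusedSectionVars false
variable {n : Type*} [Fintype n] [DecidableEq n]

lemma traceNorm_hermitian {Δ : Matrix n n ℂ} (hΔ : Δ.IsHermitian) :
    traceNorm Δ = ∑ i, |hΔ.eigenvalues i| := by
  set U : Matrix n n ℂ := (hΔ.eigenvectorUnitary : Matrix n n ℂ) with hUdef
  have hUU : star U * U = 1 := Unitary.coe_star_mul_self hΔ.eigenvectorUnitary
  set D : Matrix n n ℂ := diagonal (fun i => ((|hΔ.eigenvalues i| : ℝ) : ℂ)) with hD
  set S : Matrix n n ℂ := U * D * star U with hS
  have hSpsd : S.PosSemidef := by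
    apply Matrix.PosSemidef.mul_mul_conjTranspose_same
    exact Matrix.PosSemidef.diagonal fun i => by
      show (0:ℂ) ≤ _
      exact_mod_cast abs_nonneg (hΔ.eigenvalues i)
  have hsq : S ^ 2 = Δᴴ * Δ := by
    rw [hΔ.eq, pow_two, hS]
    have h1 : U * D * star U * (U * D * star U) = U * (D * D) * star U := by
      rw [show U * D * star U * (U * D * star U) = U * D * (star U * U) * (D * star U) by
        simp only [Matrix.mul_assoc], hUU]
      simp only [Matrix.mul_assoc, Matrix.mul_one, Matrix.one_mul]
    have h2 : Δ * Δ = U * (diagonal (RCLike.ofReal ∘ hΔ.eigenvalues) *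
        diagonal (RCLike.ofReal ∘ hΔ.eigenvalues)) * star U := by
      conv_lhs => rw [hΔ.spectral_theorem, Unitary.conjStarAlgAut_apply, ← hUdef]
      rw [show U * diagonal (RCLike.ofReal ∘ hΔ.eigenvalues) * star U *
          (U * diagonal (RCLike.ofReal ∘ hΔ.eigenvalues) * star U) =
          U * diagonal (RCLike.ofReal ∘ hΔ.eigenvalues) * (star U * U) *
          (diagonal (RCLike.ofReal ∘ hΔ.eigenvalues) * star U) by
        simp only [Matrix.mul_assoc], hUU]
      simp only [Matrix.mul_assoc, Matrix.mul_one, Matrix.one_mul]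
    have hDD : D * D = diagonal (RCLike.ofReal ∘ hΔ.eigenvalues) *
        diagonal (RCLike.ofReal ∘ hΔ.eigenvalues) := by
      rw [hD, Matrix.diagonal_mul_diagonal, Matrix.diagonal_mul_diagonal]
      apply congrArg
      funext i
      show ((|hΔ.eigenvalues i| : ℝ) : ℂ) * ((|hΔ.eigenvalues i| : ℝ) : ℂ) = _
      rw [← Complex.ofReal_mul, abs_mul_abs_self]
      simp [Complex.ofReal_mul]
    rw [h1, hDD, ← h2]
  have hSeq : S = (((Matrix.posSemidef_conjTranspose_mul_self Δ).1.eigenvectorUnitary : Matrix n n ℂ) *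
      diagonal (((↑) : ℝ → ℂ) ∘ (√·) ∘ (Matrix.posSemidef_conjTranspose_mul_self Δ).1.eigenvalues) *
      (star (Matrix.posSemidef_conjTranspose_mul_self Δ).1.eigenvectorUnitary : Matrix n n ℂ)) := by
    open scoped MatrixOrder Matrix.Norms.L2Operator in
    have h1 : CFC.sqrt (Δᴴ * Δ) = S :=
      CFC.sqrt_unique (by rw [← sq]; exact hsq) hSpsd.nonneg
    open scoped MatrixOrder Matrix.Norms.L2Operator in
    rw [← h1, CFC.sqrt_eq_cfc, cfc_nnreal_eq_real _ (Δᴴ * Δ)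
      (Matrix.posSemidef_conjTranspose_mul_self Δ).nonneg,
      (Matrix.posSemidef_conjTranspose_mul_self Δ).1.cfc_eq]
    simp only [IsHermitian.cfc, Unitary.conjStarAlgAut_apply, Real.coe_sqrt, Real.coe_toNNReal']
    congr 3
    funext i
    simp [max_eq_left ((Matrix.posSemidef_conjTranspose_mul_self Δ).eigenvalues_nonneg i)]
  rw [traceNorm, ← hSeq, hS, Matrix.trace_mul_comm, ← Matrix.mul_assoc, hUU, Matrix.one_mul,
    hD, Matrix.trace_diagonal]
  simp [Complex.re_sum]

lemma diag_re_nonneg' {A : Matrix n n ℂ} (hA : A.PosSemidef) (i : n) : 0 ≤ (A i i).re := by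
  have h := hA.re_dotProduct_nonneg (Pi.single i 1)
  simpa [dotProduct, mulVec, Pi.single_apply, Finset.mul_sum] using h

lemma trace_mul_expand {A Δ : Matrix n n ℂ} (hΔ : Δ.IsHermitian) :
    (A * Δ).trace = ∑ i, (hΔ.eigenvalues i : ℂ) *
      ((star (hΔ.eigenvectorUnitary : Matrix n n ℂ) * A *
        (hΔ.eigenvectorUnitary : Matrix n n ℂ)) i i) := by
  conv_lhs => rw [hΔ.spectral_theorem, Unitary.conjStarAlgAut_apply, ← Matrix.mul_assoc, ← Matrix.mul_assoc]
  rw [Matrix.trace_mul_comm, ← Matrix.mul_assoc, ← Matrix.mul_assoc]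
  simp only [Matrix.trace, Matrix.diag, Matrix.mul_diagonal, Function.comp_apply]
  exact Finset.sum_congr rfl fun i _ => mul_comm _ _

lemma conj_diag_re_nonneg {A : Matrix n n ℂ} (hA : A.PosSemidef) (U : Matrix n n ℂ) (i : n) :
    0 ≤ ((star U * A * U) i i).re :=
  diag_re_nonneg' (by simpa [Matrix.star_eq_conjTranspose] using
    hA.conjTranspose_mul_mul_same (B := U)) i

lemma re_trace_mul_nonneg {A B : Matrix n n ℂ} (hA : A.PosSemidef) (hB : B.PosSemidef) :
    0 ≤ ((A * B).trace).re := by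
  rw [trace_mul_expand hB.1, Complex.re_sum]
  refine Finset.sum_nonneg fun i _ => ?_
  have h1 : 0 ≤ hB.1.eigenvalues i := hB.eigenvalues_nonneg i
  have h2 := conj_diag_re_nonneg hA (hB.1.eigenvectorUnitary : Matrix n n ℂ) i
  calc (0:ℝ) ≤ hB.1.eigenvalues i * _ := mul_nonneg h1 h2
  _ = _ := by rw [← Complex.ofReal_re (hB.1.eigenvalues i)]; exact (Complex.re_ofReal_mul _ _).symm

lemma psd_trace_zero {A : Matrix n n ℂ} (hA : A.PosSemidef) (h : A.trace.re = 0) : A = 0 := by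
  have hexp : A.trace = ∑ i, (hA.1.eigenvalues i : ℂ) := by
    conv_lhs => rw [← Matrix.one_mul A, trace_mul_expand hA.1]
    refine Finset.sum_congr rfl fun i _ => ?_
    rw [Matrix.mul_one, Unitary.coe_star_mul_self hA.1.eigenvectorUnitary]
    simp [Matrix.one_apply]
  have hsumre : ∑ i, hA.1.eigenvalues i = 0 := by
    have := h
    rw [hexp, Complex.re_sum] at this
    simpa using this
  have hall : ∀ i, hA.1.eigenvalues i = 0 := fun i =>
    (Finset.sum_eq_zero_iff_of_nonneg (fun j _ => hA.eigenvalues_nonneg j)).mp hsumre i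
      (Finset.mem_univ i)
  have : A = _ := hA.1.spectral_theorem
  rw [this, Unitary.conjStarAlgAut_apply]
  have : diagonal (RCLike.ofReal ∘ hA.1.eigenvalues) = (0 : Matrix n n ℂ) := by
    rw [show RCLike.ofReal ∘ hA.1.eigenvalues = fun _ => (0:ℂ) from funext fun i => by
      simp [hall i]]
    simp [Matrix.diagonal_zero]
  rw [this, Matrix.mul_zero, Matrix.zero_mul]

lemma sum_abs_re_trace_le {o' : ℕ} {Δ : Matrix n n ℂ} (hΔ : Δ.IsHermitian)
    (N : Fin o' → Matrix n n ℂ) (hN : ∀ b, (N b).PosSemidef)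
    (hsum : ∑ b, N b = 1) :
    ∑ b, |((N b * Δ).trace).re| ≤ traceNorm Δ := by
  rw [traceNorm_hermitian hΔ]
  set U : Matrix n n ℂ := (hΔ.eigenvectorUnitary : Matrix n n ℂ) with hU
  have hre : ∀ b, ((N b * Δ).trace).re =
      ∑ i, hΔ.eigenvalues i * ((star U * N b * U) i i).re := by
    intro b
    rw [trace_mul_expand hΔ, Complex.re_sum]
    exact Finset.sum_congr rfl fun i _ => by
      rw [← Complex.ofReal_re (hΔ.eigenvalues i)]
      exact Complex.re_ofReal_mul _ _
  have hcsum : ∀ i, ∑ b, ((star U * N b * U) i i).re = 1 := by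
    intro i
    have : ∑ b, star U * N b * U = star U * U := by
      rw [← Finset.sum_mul, ← Finset.mul_sum, hsum, Matrix.mul_one]
    calc ∑ b, ((star U * N b * U) i i).re
        = ((∑ b, star U * N b * U) i i).re := by
          simp [Matrix.sum_apply, Complex.re_sum]
      _ = 1 := by rw [this, Unitary.coe_star_mul_self hΔ.eigenvectorUnitary]
                  simp [Matrix.one_apply]
  calc ∑ b, |((N b * Δ).trace).re|
      ≤ ∑ b, ∑ i, |hΔ.eigenvalues i| * ((star U * N b * U) i i).re := by
        refine Finset.sum_le_sum fun b _ => ?_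
        rw [hre b]
        refine (Finset.abs_sum_le_sum_abs _ _).trans (Finset.sum_le_sum fun i _ => ?_)
        rw [abs_mul, abs_of_nonneg (conj_diag_re_nonneg (hN b) U i)]
    _ = ∑ i, |hΔ.eigenvalues i| * ∑ b, ((star U * N b * U) i i).re := by
        rw [Finset.sum_comm]
        exact Finset.sum_congr rfl fun i _ => (Finset.mul_sum _ _ _).symm
    _ = ∑ i, |hΔ.eigenvalues i| := by
        exact Finset.sum_congr rfl fun i _ => by rw [hcsum i, mul_one]


lemma trace_re_nonneg' {A : Matrix n n ℂ} (hA : A.PosSemidef) : 0 ≤ A.trace.re := by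
  rw [Matrix.trace]
  simp only [Complex.re_sum]
  exact Finset.sum_nonneg fun i _ => diag_re_nonneg' hA i

lemma psd_smul' {A : Matrix n n ℂ} (hA : A.PosSemidef) {c : ℝ} (hc : 0 ≤ c) :
    ((c : ℂ) • A).PosSemidef := by
  constructor
  · show ((c:ℂ) • A)ᴴ = _
    rw [Matrix.conjTranspose_smul, hA.1.eq]
    congr 1
    simp [Complex.conj_ofReal]
  · exact (hA.smul (show (0:ℂ) ≤ (c:ℂ) by exact_mod_cast hc)).2

lemma herm_trace_re {A : Matrix n n ℂ} (hA : A.IsHermitian) : ((A.trace.re : ℝ) : ℂ) = A.trace := by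
  have h : star A.trace = A.trace := by
    rw [← Matrix.trace_conjTranspose, hA.eq]
  exact (Complex.conj_eq_iff_re.mp h)


end Helpers

lemma local_of_lhs {d m m' o o' : ℕ} (hd : 0 < d)
    (σ' : (Fin m → Fin o) → Matrix (Fin d) (Fin d) ℂ)
    (hpsd : ∀ lam, (σ' lam).PosSemidef) (htr : ∑ lam, (σ' lam).trace = 1)
    (N : Fin m' → Fin o' → Matrix (Fin d) (Fin d) ℂ)
    (hNpsd : ∀ y b, (N y b).PosSemidef) (hNsum : ∀ y, ∑ b, N y b = 1) :
    IsLocalBehavior (fun x y a b =>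
      ∑ lam ∈ Finset.univ.filter (fun lam : Fin m → Fin o => lam x = a),
        ((N y b * σ' lam).trace).re) := by
  classical
  set ρ0 : Matrix (Fin d) (Fin d) ℂ := (((d : ℝ)⁻¹ : ℝ) : ℂ) • 1 with hρ0
  have hρ0psd : ρ0.PosSemidef := psd_smul' Matrix.PosSemidef.one (inv_nonneg.mpr (Nat.cast_nonneg d))
  have hρ0tr : ρ0.trace = 1 := by
    rw [hρ0, Matrix.trace_smul, Matrix.trace_one]
    simp only [smul_eq_mul, Fintype.card_fin]
    rw [← Complex.ofReal_natCast, ← Complex.ofReal_mul]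
    rw [inv_mul_cancel₀ (by exact_mod_cast hd.ne')]
    simp
  set c : (Fin m → Fin o) → ℝ := fun lam => (σ' lam).trace.re with hc
  have hc0 : ∀ lam, 0 ≤ c lam := fun lam => trace_re_nonneg' (hpsd lam)
  have hcsum : ∑ lam, c lam = 1 := by
    have := congrArg Complex.re htr
    rw [Complex.re_sum] at this
    simpa using this
  set ρ : (Fin m → Fin o) → Matrix (Fin d) (Fin d) ℂ :=
    fun lam => if c lam = 0 then ρ0 else (((c lam)⁻¹ : ℝ) : ℂ) • σ' lam with hρ
  have hρpsd : ∀ lam, (ρ lam).PosSemidef := by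
    intro lam
    rw [hρ]
    dsimp only
    split
    · exact hρ0psd
    · exact psd_smul' (hpsd lam) (inv_nonneg.mpr (hc0 lam))
  have hρtr : ∀ lam, (ρ lam).trace = 1 := by
    intro lam
    rw [hρ]
    dsimp only
    split
    · exact hρ0tr
    · rename_i hne
      rw [Matrix.trace_smul, smul_eq_mul, ← herm_trace_re (hpsd lam).1,
        ← Complex.ofReal_mul]
      exact_mod_cast inv_mul_cancel₀ hne
  set g : (Fin m → Fin o) → Fin m' → Fin o' → ℝ :=
    fun lam y b => ((N y b * ρ lam).trace).re with hg
  have hg0 : ∀ lam y b, 0 ≤ g lam y b := fun lam y b =>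
    re_trace_mul_nonneg (hNpsd y b) (hρpsd lam)
  have hg1 : ∀ lam y, ∑ b, g lam y b = 1 := by
    intro lam y
    rw [hg]
    dsimp only
    rw [← Complex.re_sum, ← Matrix.trace_sum, ← Finset.sum_mul, hNsum y, Matrix.one_mul,
      hρtr lam]
    simp
  have hkey : ∀ lam y b, ((N y b * σ' lam).trace).re = c lam * g lam y b := by
    intro lam y b
    by_cases hcz : c lam = 0
    · have : σ' lam = 0 := psd_trace_zero (hpsd lam) hcz
      rw [this, hcz, Matrix.mul_zero, Matrix.trace_zero, zero_mul]
      simp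
    · rw [hg]
      dsimp only
      rw [hρ]
      dsimp only
      rw [if_neg hcz, Matrix.mul_smul, Matrix.trace_smul, smul_eq_mul, Complex.re_ofReal_mul]
      field_simp
  refine ⟨fun p => c p.1 * ∏ y, g p.1 y (p.2 y), fun p => mul_nonneg (hc0 p.1)
    (Finset.prod_nonneg fun y _ => hg0 p.1 y (p.2 y)), ?_, ?_⟩
  · rw [Fintype.sum_prod_type]
    have hinner : ∀ lam, ∑ lamB : Fin m' → Fin o', ∏ y, g lam y (lamB y) = 1 := by
      intro lam
      rw [← Fintype.prod_sum (f := fun y b => g lam y b)]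
      simp [hg1 lam]
    calc ∑ lam, ∑ lamB : Fin m' → Fin o', c lam * ∏ y, g lam y (lamB y)
        = ∑ lam, c lam * ∑ lamB : Fin m' → Fin o', ∏ y, g lam y (lamB y) := by
          exact Finset.sum_congr rfl fun lam _ => (Finset.mul_sum _ _ _).symm
      _ = 1 := by simp only [hinner, mul_one]; exact hcsum
  · intro x y a b
    have hmarg : ∀ lam, ∑ lamB ∈ Finset.univ.filter (fun lamB : Fin m' → Fin o' => lamB y = b),
        ∏ y', g lam y' (lamB y') = g lam y b := by
      intro lam
      set h : Fin m' → Fin o' → ℝ := fun y' b' =>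
        if y' = y then (if b' = b then g lam y b else 0) else g lam y' b' with hh
      have claim1 : ∀ lamB : Fin m' → Fin o',
          (if lamB y = b then ∏ y', g lam y' (lamB y') else 0) = ∏ y', h y' (lamB y') := by
        intro lamB
        by_cases hb : lamB y = b
        · rw [if_pos hb]
          refine Finset.prod_congr rfl fun y' _ => ?_
          rw [hh]
          dsimp only
          by_cases hy : y' = y
          · subst hy
            rw [if_pos rfl, if_pos hb, hb]
          · rw [if_neg hy]
        · rw [if_neg hb]
          symm
          refine Finset.prod_eq_zero (Finset.mem_univ y) ?_
          rw [hh]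
          dsimp only
          rw [if_pos rfl, if_neg hb]
      rw [Finset.sum_filter]
      calc ∑ lamB : Fin m' → Fin o', (if lamB y = b then ∏ y', g lam y' (lamB y') else 0)
          = ∑ lamB : Fin m' → Fin o', ∏ y', h y' (lamB y') := Finset.sum_congr rfl
            fun lamB _ => claim1 lamB
        _ = ∏ y', ∑ b', h y' b' := (Fintype.prod_sum (f := fun y' b' => h y' b')).symm
        _ = g lam y b := by
            have : ∀ y', ∑ b', h y' b' = if y' = y then g lam y b else 1 := by
              intro y'
              rw [hh]
              dsimp only
              by_cases hy : y' = y
              · rw [if_pos hy]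
                simp only [hy, if_pos]
                rw [Finset.sum_ite_eq' Finset.univ b (fun _ => g lam y b)]
                simp
              · rw [if_neg hy]
                simp only [hy, if_neg, not_false_iff]
                exact hg1 lam y'
            simp only [this]
            rw [Finset.prod_ite_eq' Finset.univ y (fun _ => g lam y b)]
            simp
    dsimp only
    rw [Finset.sum_filter, Finset.sum_filter, Fintype.sum_prod_type]
    refine Finset.sum_congr rfl fun lam _ => ?_
    by_cases ha : lam x = a
    · rw [if_pos ha]
      rw [hkey lam y b, ← hmarg lam, Finset.sum_filter, Finset.mul_sum]
      refine Finset.sum_congr rfl fun lamB _ => ?_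
      by_cases hb : lamB y = b
      · simp [ha, hb]
      · simp [ha, hb]
    · rw [if_neg ha]
      symm
      refine Finset.sum_eq_zero fun lamB _ => ?_
      simp [ha]


/-- The nonlocality of the behavior obtained by measuring `N` on a state assemblage `σ`
is bounded by the steerability of `σ`. -/
theorem nonlocality_le_steerability {d m m' o o' : ℕ}
    (σ : Fin m → Fin o → Matrix (Fin d) (Fin d) ℂ) (hσ : IsStateAssemblage σ)
    (pA : Fin m → ℝ) (hpA : IsWeighting pA)
    (N : Fin m' → Fin o' → Matrix (Fin d) (Fin d) ℂ) (hN : IsAssemblage N)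
    (pB : Fin m' → ℝ) (hpB : IsWeighting pB) :
    Nonlocality pA pB (fun x y a b => ((N y b * σ x a).trace).re) ≤ Steerability pA σ := by
  classical
  set q : Fin m → Fin m' → Fin o → Fin o' → ℝ :=
    fun x y a b => ((N y b * σ x a).trace).re with hq
  rcases isEmpty_or_nonempty
      {τ : Fin m → Fin o → Matrix (Fin d) (Fin d) ℂ // IsStateAssemblage τ ∧ HasLHSModel τ}
      with he | hne
  · -- Degenerate case: no LHS state assemblage exists at all; force m = 0.
    have hm : m = 0 := by
      by_contra hm0
      have hmpos : 0 < m := Nat.pos_of_ne_zero hm0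
      have hd : 0 < d := by
        by_contra hd0
        have hd : d = 0 := Nat.eq_zero_of_not_pos hd0
        subst hd
        have := hσ.2 ⟨0, hmpos⟩
        simp [Matrix.trace_eq_zero_of_isEmpty] at this
      have ho : 0 < o := by
        by_contra ho0
        have ho : o = 0 := Nat.eq_zero_of_not_pos ho0
        subst ho
        have := hσ.2 ⟨0, hmpos⟩
        simp at this
      set ρ0 : Matrix (Fin d) (Fin d) ℂ := (((d : ℝ)⁻¹ : ℝ) : ℂ) • 1 with hρ0
      have hρ0psd : ρ0.PosSemidef := psd_smul' Matrix.PosSemidef.one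
        (inv_nonneg.mpr (Nat.cast_nonneg d))
      have hρ0tr : ρ0.trace = 1 := by
        rw [hρ0, Matrix.trace_smul, Matrix.trace_one]
        simp only [smul_eq_mul, Fintype.card_fin]
        rw [← Complex.ofReal_natCast, ← Complex.ofReal_mul,
          inv_mul_cancel₀ (by exact_mod_cast hd.ne')]
        simp
      set a0 : Fin o := ⟨0, ho⟩ with ha0
      set c0 : Fin m → Fin o := fun _ => a0 with hc0
      set τ : Fin m → Fin o → Matrix (Fin d) (Fin d) ℂ :=
        fun _ a => if a = a0 then ρ0 else 0 with hτ
      have htrτ : ∀ a : Fin o, (if a = a0 then ρ0 else 0).trace = if a = a0 then (1:ℂ) else 0 := by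
        intro a
        split <;> simp [hρ0tr]
      have hτS : IsStateAssemblage τ := by
        constructor
        · intro x a
          rw [hτ]
          dsimp only
          split
          · exact hρ0psd
          · exact Matrix.PosSemidef.zero
        · intro x
          rw [hτ]
          dsimp only
          simp only [htrτ]
          simp
      have hτL : HasLHSModel τ := by
        refine ⟨fun lam => if lam = c0 then ρ0 else 0, ?_, ?_, ?_⟩
        · intro lam
          dsimp only
          split
          · exact hρ0psd
          · exact Matrix.PosSemidef.zero
        · have : ∀ lam : Fin m → Fin o, (if lam = c0 then ρ0 else 0).trace =
              if lam = c0 then (1:ℂ) else 0 := by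
            intro lam
            split <;> simp [hρ0tr]
          simp only [this]
          simp
        · intro x a
          rw [Finset.sum_filter]
          have hstep : ∀ lam : Fin m → Fin o,
              (if lam x = a then (if lam = c0 then ρ0 else 0) else 0) =
              if lam = c0 then (if a = a0 then ρ0 else 0) else 0 := by
            intro lam
            by_cases hl : lam = c0
            · subst hl
              simp only [if_pos rfl, hc0]
              by_cases h : a = a0
              · simp [h]
              · simp [h, show ¬ a0 = a from fun hh => h hh.symm]
            · simp [hl]
          simp only [hstep]
          rw [Finset.sum_ite_eq' Finset.univ c0 (fun _ => if a = a0 then ρ0 else 0)]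
          simp [hτ]
      exact he.false ⟨τ, hτS, hτL⟩
    subst hm
    have hS0 : Steerability pA σ = 0 := Real.iInf_of_isEmpty _
    rw [hS0]
    rcases isEmpty_or_nonempty
        {s : Fin 0 → Fin m' → Fin o → Fin o' → ℝ // IsLocalBehavior s} with ht | ht
    · have : Nonlocality pA pB q = 0 := Real.iInf_of_isEmpty _
      rw [this]
    · obtain ⟨s0⟩ := ht
      have hbdd0 : BddBelow (Set.range fun s : {s : Fin 0 → Fin m' → Fin o → Fin o' → ℝ //
          IsLocalBehavior s} =>
          (1 / 2 : ℝ) * ∑ x, ∑ y, ∑ a, ∑ b, pA x * pB y * |q x y a b - s.1 x y a b|) := by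
        refine ⟨0, ?_⟩
        rintro r ⟨s, rfl⟩
        simp
      have hle := ciInf_le hbdd0 s0
      refine hle.trans (le_of_eq ?_)
      simp
  · rw [Steerability]
    refine le_ciInf fun τfull => ?_
    obtain ⟨τ, hτS, hτL⟩ := τfull
    obtain ⟨σ', hσ'psd, hσ'tr, hσ'rep⟩ := hτL
    have hd : 0 < d := by
      by_contra hd0
      have hd : d = 0 := Nat.eq_zero_of_not_pos hd0
      subst hd
      simp only [Matrix.trace_eq_zero_of_isEmpty] at hσ'tr
      simp at hσ'tr
    have hloc := local_of_lhs hd σ' hσ'psd hσ'tr N hN.1 hN.2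
    set t : Fin m → Fin m' → Fin o → Fin o' → ℝ := fun x y a b =>
      ∑ lam ∈ Finset.univ.filter (fun lam : Fin m → Fin o => lam x = a),
        ((N y b * σ' lam).trace).re with ht
    have htval : ∀ x y a b, t x y a b = ((N y b * τ x a).trace).re := by
      intro x y a b
      rw [ht]
      dsimp only
      rw [hσ'rep x a, Finset.mul_sum, Matrix.trace_sum, Complex.re_sum]
    have hdiff : ∀ x y a b, q x y a b - t x y a b =
        ((N y b * (σ x a - τ x a)).trace).re := by
      intro x y a b
      rw [htval, hq]
      dsimp only
      rw [Matrix.mul_sub, Matrix.trace_sub, Complex.sub_re]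
    have hbdd : BddBelow (Set.range fun s : {s : Fin m → Fin m' → Fin o → Fin o' → ℝ //
        IsLocalBehavior s} =>
        (1 / 2 : ℝ) * ∑ x, ∑ y, ∑ a, ∑ b, pA x * pB y * |q x y a b - s.1 x y a b|) := by
      refine ⟨0, ?_⟩
      rintro r ⟨s, rfl⟩
      have : (0:ℝ) ≤ ∑ x, ∑ y, ∑ a, ∑ b, pA x * pB y * |q x y a b - s.1 x y a b| := by
        refine Finset.sum_nonneg fun x _ => Finset.sum_nonneg fun y _ =>
          Finset.sum_nonneg fun a _ => Finset.sum_nonneg fun b _ => ?_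
        exact mul_nonneg (mul_nonneg (hpA.1 x).le (hpB.1 y).le) (abs_nonneg _)
      linarith
    have h1 : Nonlocality pA pB q ≤
        (1 / 2 : ℝ) * ∑ x, ∑ y, ∑ a, ∑ b, pA x * pB y * |q x y a b - t x y a b| :=
      ciInf_le hbdd ⟨t, hloc⟩
    refine h1.trans ?_
    have hmain : ∀ x, ∑ y, ∑ a, ∑ b, pA x * pB y * |q x y a b - t x y a b| ≤
        pA x * ∑ a, traceNorm (σ x a - τ x a) := by
      intro x
      have hherm : ∀ a, (σ x a - τ x a).IsHermitian :=
        fun a => ((hσ.1 x a).1).sub ((hτS.1 x a).1)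
      have hstep : ∀ y, ∑ a, ∑ b, |q x y a b - t x y a b| ≤
          ∑ a, traceNorm (σ x a - τ x a) := by
        intro y
        refine Finset.sum_le_sum fun a _ => ?_
        have hb := sum_abs_re_trace_le (hherm a) (fun b => N y b) (fun b => hN.1 y b) (hN.2 y)
        refine le_trans (le_of_eq ?_) hb
        exact Finset.sum_congr rfl fun b _ => by rw [hdiff]
      calc ∑ y, ∑ a, ∑ b, pA x * pB y * |q x y a b - t x y a b|
          = pA x * ∑ y, pB y * ∑ a, ∑ b, |q x y a b - t x y a b| := by
            simp only [Finset.mul_sum]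
            exact Finset.sum_congr rfl fun y _ => Finset.sum_congr rfl fun a _ =>
              Finset.sum_congr rfl fun b _ => by ring
        _ ≤ pA x * ∑ y, pB y * ∑ a, traceNorm (σ x a - τ x a) := by
            refine mul_le_mul_of_nonneg_left ?_ (hpA.1 x).le
            refine Finset.sum_le_sum fun y _ => ?_
            exact mul_le_mul_of_nonneg_left (hstep y) (hpB.1 y).le
        _ = pA x * ∑ a, traceNorm (σ x a - τ x a) := by
            rw [← Finset.sum_mul, hpB.2, one_mul]
    refine mul_le_mul_of_nonneg_left ?_ (by norm_num)
    exact Finset.sum_le_sum fun x _ => hmain x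


end
end

section
/- Let M be a measurement assemblage in dimension d with m settings and o outcomes, p a weighting, and ρ a density matrix on Fin d × Fin d. Define σ x a = Tr₁[(M x a ⊗ₖ 1) ρ]. Then the steerability of σ is bounded by the geometric entanglement of ρ: S(σ,p) ≤ E(ρ). -/
open Matrix Kronecker BigOperators ComplexOrder

noncomputable section

def IsSeparableState {d : ℕ} (ρS : Matrix (Fin d × Fin d) (Fin d × Fin d) ℂ) : Prop :=
  ∃ (k : ℕ) (w : Fin k → ℝ) (A B : Fin k → Matrix (Fin d) (Fin d) ℂ),
    (∀ i, 0 ≤ w i) ∧ (∑ i, w i = 1) ∧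
    (∀ i, IsDensityMatrix (A i)) ∧ (∀ i, IsDensityMatrix (B i)) ∧
    ρS = ∑ i, w i • ((A i) ⊗ₖ (B i))

noncomputable def GeomEntanglement {d : ℕ}
    (ρ : Matrix (Fin d × Fin d) (Fin d × Fin d) ℂ) : ℝ :=
  ⨅ ρS : {ρS : Matrix (Fin d × Fin d) (Fin d × Fin d) ℂ //
            IsDensityMatrix ρS ∧ IsSeparableState ρS},
    (1 / 2) * traceNorm (ρ - ρS.1)


open scoped MatrixOrder in
lemma traceNorm_eq_sqrt {n : Type*} [Fintype n] [DecidableEq n] (X : Matrix n n ℂ) :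
    traceNorm X = (CFC.sqrt (Xᴴ * X)).trace.re := by
  rw [CFC.sqrt_eq_real_sqrt _
      (Matrix.nonneg_iff_posSemidef.mpr (Matrix.posSemidef_conjTranspose_mul_self X)),
    cfcₙ_eq_cfc (hf0 := Real.sqrt_zero), Matrix.IsHermitian.cfc_eq (Matrix.posSemidef_conjTranspose_mul_self X).1]
  simp only [Matrix.IsHermitian.cfc, Unitary.conjStarAlgAut_apply]
  rfl

section Aux

open Finset

open scoped MatrixOrder

variable {n : Type*} [Fintype n] [DecidableEq n]

lemma star_of_nonneg {c : ℂ} (h : 0 ≤ c) : star c = c := by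
  obtain ⟨hre, him⟩ := RCLike.nonneg_iff.mp h
  apply Complex.ext <;> simp_all

lemma psd_smul {B : Matrix n n ℂ} (hB : B.PosSemidef) {c : ℂ} (hc : 0 ≤ c) :
    (c • B).PosSemidef := by
  constructor
  · unfold Matrix.IsHermitian
    rw [Matrix.conjTranspose_smul, hB.1.eq, star_of_nonneg hc]
  · intro x
    exact (hB.smul hc).2 x

lemma psd_sum {ι : Type*} (s : Finset ι) (f : ι → Matrix n n ℂ)
    (h : ∀ i ∈ s, (f i).PosSemidef) : (∑ i ∈ s, f i).PosSemidef := by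
  classical
  induction s using Finset.induction with
  | empty => simpa using Matrix.PosSemidef.zero
  | insert _ _ hx ih =>
    rw [Finset.sum_insert hx]
    exact (h _ (Finset.mem_insert_self _ _)).add
      (ih fun i hi => h i (Finset.mem_insert_of_mem hi))

lemma psd_diag_nonneg {A : Matrix n n ℂ} (hA : A.PosSemidef) (i : n) : 0 ≤ A i i := by
  exact hA.diag_nonneg

lemma psd_trace_nonneg {A : Matrix n n ℂ} (hA : A.PosSemidef) : 0 ≤ A.trace :=
  Finset.sum_nonneg fun i _ => psd_diag_nonneg hA i

lemma trace_mul_psd_nonneg {A B : Matrix n n ℂ} (hA : A.PosSemidef) (hB : B.PosSemidef) :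
    0 ≤ (A * B).trace := by
  have h1 : A * B = A * CFC.sqrt B * CFC.sqrt B := by
    rw [mul_assoc, CFC.sqrt_mul_sqrt_self B (Matrix.nonneg_iff_posSemidef.mpr hB)]
  have h2 : (CFC.sqrt B * A * (CFC.sqrt B)ᴴ).PosSemidef := hA.mul_mul_conjTranspose_same _
  rw [h1, Matrix.trace_mul_cycle]
  rw [(Matrix.nonneg_iff_posSemidef.mp (CFC.sqrt_nonneg B)).1.eq] at h2
  exact psd_trace_nonneg h2

section Ptrace
variable {e : Type*} [Fintype e] [DecidableEq e]

lemma ptrace1_sub (X Y : Matrix (n × e) (n × e) ℂ) :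
    ptrace1 (X - Y) = ptrace1 X - ptrace1 Y := by
  ext j j'
  simp [ptrace1, Finset.sum_sub_distrib]

lemma ptrace1_smul (c : ℝ) (X : Matrix (n × e) (n × e) ℂ) :
    ptrace1 (c • X) = c • ptrace1 X := by
  ext j j'
  simp [ptrace1, Finset.smul_sum]

lemma ptrace1_sum {ι : Type*} (s : Finset ι) (f : ι → Matrix (n × e) (n × e) ℂ) :
    ptrace1 (∑ i ∈ s, f i) = ∑ i ∈ s, ptrace1 (f i) := by
  ext j j'
  simp [ptrace1, Matrix.sum_apply]
  rw [Finset.sum_comm]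

lemma trace_ptrace1 (X : Matrix (n × e) (n × e) ℂ) :
    (ptrace1 X).trace = X.trace := by
  simp [ptrace1, Matrix.trace, Matrix.diag, Fintype.sum_prod_type]
  rw [Finset.sum_comm]

lemma ptrace1_kron (X : Matrix n n ℂ) (Y : Matrix e e ℂ) :
    ptrace1 (X ⊗ₖ Y) = X.trace • Y := by
  ext j j'
  simp [ptrace1, Matrix.trace, Matrix.diag, Finset.sum_mul]

lemma ptrace1_eq_sum_conj (Q : Matrix (n × e) (n × e) ℂ) :
    ptrace1 Q = ∑ i : n, (Matrix.of fun (q : n × e) (j : e) => if q = (i, j) then (1:ℂ) else 0)ᴴ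
      * Q * (Matrix.of fun (q : n × e) (j : e) => if q = (i, j) then (1:ℂ) else 0) := by
  ext j j'
  simp only [ptrace1, Matrix.of_apply, Matrix.sum_apply, Matrix.mul_apply,
    Matrix.conjTranspose_apply, Fintype.sum_prod_type, apply_ite star, star_one, star_zero,
    Prod.mk.injEq, ite_mul, mul_ite, one_mul, mul_one, zero_mul, mul_zero, ite_and]
  simp [Finset.sum_ite_eq, Finset.sum_ite_eq']

lemma ptrace1_psd {Q : Matrix (n × e) (n × e) ℂ} (hQ : Q.PosSemidef) :
    (ptrace1 Q).PosSemidef := by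
  rw [ptrace1_eq_sum_conj]
  exact psd_sum _ _ fun i _ => hQ.conjTranspose_mul_mul_same _

open Kronecker in
lemma ptrace1_kron_mul_comm (K : Matrix n n ℂ) (Q : Matrix (n × e) (n × e) ℂ) :
    ptrace1 ((K ⊗ₖ (1 : Matrix e e ℂ)) * Q) = ptrace1 (Q * (K ⊗ₖ (1 : Matrix e e ℂ))) := by
  ext j j'
  simp only [ptrace1, Matrix.of_apply, Matrix.mul_apply, Fintype.sum_prod_type,
    Matrix.kroneckerMap_apply, Matrix.one_apply, mul_ite, ite_mul, mul_zero, zero_mul,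
    mul_one, one_mul, Finset.sum_ite_eq, Finset.sum_ite_eq', Finset.mem_univ, if_true]
  rw [Finset.sum_comm]
  refine Finset.sum_congr rfl fun i _ => Finset.sum_congr rfl fun i' _ => mul_comm _ _

open Kronecker in
lemma kron_one_conjTranspose (K : Matrix n n ℂ) :
    (K ⊗ₖ (1 : Matrix e e ℂ))ᴴ = Kᴴ ⊗ₖ (1 : Matrix e e ℂ) := by
  ext q q'
  obtain ⟨i, j⟩ := q
  obtain ⟨i', j'⟩ := q'
  simp only [Matrix.conjTranspose_apply, Matrix.kroneckerMap_apply, Matrix.one_apply,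
    star_mul', mul_comm]
  by_cases h : j = j' <;> simp [h, eq_comm, mul_comm]

open Kronecker in
lemma psd_ptrace_kron {K : Matrix n n ℂ} {Q : Matrix (n × e) (n × e) ℂ}
    (hK : K.PosSemidef) (hQ : Q.PosSemidef) :
    (ptrace1 ((K ⊗ₖ (1 : Matrix e e ℂ)) * Q)).PosSemidef := by
  have hs := Matrix.nonneg_iff_posSemidef.mp (CFC.sqrt_nonneg K)
  have h1 : (K ⊗ₖ (1 : Matrix e e ℂ)) * Q
      = (CFC.sqrt K ⊗ₖ (1 : Matrix e e ℂ)) * ((CFC.sqrt K ⊗ₖ (1 : Matrix e e ℂ)) * Q) := by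
    rw [← mul_assoc, ← Matrix.mul_kronecker_mul, CFC.sqrt_mul_sqrt_self K (Matrix.nonneg_iff_posSemidef.mpr hK), one_mul]
  rw [h1, ptrace1_kron_mul_comm, mul_assoc]
  have h2 : (CFC.sqrt K ⊗ₖ (1 : Matrix e e ℂ)) * (Q * (CFC.sqrt K ⊗ₖ (1 : Matrix e e ℂ)))
      = (CFC.sqrt K ⊗ₖ (1 : Matrix e e ℂ)) * Q * (CFC.sqrt K ⊗ₖ (1 : Matrix e e ℂ))ᴴ := by
    rw [kron_one_conjTranspose, hs.1.eq, mul_assoc]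
  rw [h2]
  exact ptrace1_psd (hQ.mul_mul_conjTranspose_same _)

end Ptrace

lemma traceNorm_psd {A : Matrix n n ℂ} (hA : A.PosSemidef) : traceNorm A = A.trace.re := by
  rw [traceNorm_eq_sqrt]
  have h : A = CFC.sqrt (Aᴴ * A) :=
    (CFC.sqrt_unique (by rw [hA.1.eq]) (Matrix.nonneg_iff_posSemidef.mpr hA)).symm
  rw [← h]

lemma traceNorm_nonneg (A : Matrix n n ℂ) : 0 ≤ traceNorm A := by
  rw [traceNorm_eq_sqrt]
  exact (RCLike.nonneg_iff.mp
    (psd_trace_nonneg (Matrix.nonneg_iff_posSemidef.mp (CFC.sqrt_nonneg (Aᴴ * A))))).1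

lemma traceNorm_herm {H : Matrix n n ℂ} (hH : H.IsHermitian) :
    traceNorm H = ∑ i, |hH.eigenvalues i| := by
  set U : Matrix n n ℂ := (hH.eigenvectorUnitary : Matrix n n ℂ) with hU
  have hU1 : star U * U = 1 := Matrix.mem_unitaryGroup_iff'.mp hH.eigenvectorUnitary.2
  have key : ∀ D₁ D₂ : Matrix n n ℂ,
      (U * D₁ * star U) * (U * D₂ * star U) = U * (D₁ * D₂) * star U := by
    intro D₁ D₂
    calc (U * D₁ * star U) * (U * D₂ * star U)
        = U * D₁ * (star U * U) * (D₂ * star U) := by simp only [mul_assoc]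
      _ = U * (D₁ * D₂) * star U := by rw [hU1, mul_one]; simp only [mul_assoc]
  set lam := hH.eigenvalues with hlam
  set S : Matrix n n ℂ := U * Matrix.diagonal (fun i => ((|lam i| : ℝ) : ℂ)) * star U with hS
  have hSpsd : S.PosSemidef := by
    rw [hS, Matrix.star_eq_conjTranspose]
    exact (Matrix.posSemidef_diagonal_iff.mpr (fun i =>
      Complex.zero_le_real.mpr (abs_nonneg _))).mul_mul_conjTranspose_same U
  have hsq : S ^ 2 = Hᴴ * H := by
    rw [hH.eq, pow_two, hS, key, Matrix.diagonal_mul_diagonal]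
    conv_rhs => rw [hH.spectral_theorem, Unitary.conjStarAlgAut_apply]
    rw [← hU, ← hlam, key, Matrix.diagonal_mul_diagonal]
    have hfg : (fun i => ((|lam i| : ℝ) : ℂ) * ((|lam i| : ℝ) : ℂ))
        = (fun i => (RCLike.ofReal ∘ lam) i * (RCLike.ofReal ∘ lam) i) := by
      funext i
      simp only [Function.comp_apply]
      norm_cast
      exact congrArg _ (abs_mul_abs_self (lam i))
    rw [hfg]
  have hsqrt : S = CFC.sqrt (Hᴴ * H) :=
    (CFC.sqrt_unique (by rw [← pow_two]; exact hsq) (Matrix.nonneg_iff_posSemidef.mpr hSpsd)).symm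
  rw [traceNorm_eq_sqrt]
  rw [← hsqrt, hS, Matrix.trace_mul_cycle, hU1, one_mul, Matrix.trace_diagonal]
  rw [Complex.re_sum]
  simp

lemma traceNorm_le_of_decomp {H A B : Matrix n n ℂ} (hH : H.IsHermitian)
    (hA : A.PosSemidef) (hB : B.PosSemidef) (hd : H = A - B) :
    traceNorm H ≤ A.trace.re + B.trace.re := by
  set U : Matrix n n ℂ := (hH.eigenvectorUnitary : Matrix n n ℂ) with hU
  have hU2 : U * star U = 1 := Matrix.mem_unitaryGroup_iff.mp hH.eigenvectorUnitary.2
  have hdiag : star U * H * U = Matrix.diagonal (RCLike.ofReal ∘ hH.eigenvalues) := by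
    have hU1' : star U * U = 1 := Matrix.mem_unitaryGroup_iff'.mp hH.eigenvectorUnitary.2
    conv_lhs => rw [hH.spectral_theorem, Unitary.conjStarAlgAut_apply, ← hU]
    calc star U * (U * Matrix.diagonal (RCLike.ofReal ∘ hH.eigenvalues) * star U) * U
        = (star U * U) * Matrix.diagonal (RCLike.ofReal ∘ hH.eigenvalues) * (star U * U) := by
          simp only [mul_assoc]
      _ = _ := by rw [hU1', one_mul, mul_one]
  have hApsd : (star U * A * U).PosSemidef := by
    rw [Matrix.star_eq_conjTranspose]; exact hA.conjTranspose_mul_mul_same U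
  have hBpsd : (star U * B * U).PosSemidef := by
    rw [Matrix.star_eq_conjTranspose]; exact hB.conjTranspose_mul_mul_same U
  have hsplit : ∀ i, hH.eigenvalues i
      = ((star U * A * U) i i).re - ((star U * B * U) i i).re := by
    intro i
    have h1 : (star U * H * U) i i = (star U * A * U) i i - (star U * B * U) i i := by
      rw [hd, Matrix.mul_sub, Matrix.sub_mul, Matrix.sub_apply]
    rw [hdiag] at h1
    have h2 := congrArg Complex.re h1
    simpa using h2
  rw [traceNorm_herm hH]
  have hbound : ∀ i, |hH.eigenvalues i|
      ≤ ((star U * A * U) i i).re + ((star U * B * U) i i).re := by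
    intro i
    rw [hsplit i]
    have ha := (Complex.nonneg_iff.mp (psd_diag_nonneg hApsd i)).1
    have hb := (Complex.nonneg_iff.mp (psd_diag_nonneg hBpsd i)).1
    rw [abs_le]
    constructor <;> nlinarith
  calc ∑ i, |hH.eigenvalues i|
      ≤ ∑ i, (((star U * A * U) i i).re + ((star U * B * U) i i).re) :=
        Finset.sum_le_sum fun i _ => hbound i
    _ = ((star U * A * U).trace).re + ((star U * B * U).trace).re := by
        rw [Finset.sum_add_distrib]
        simp [Matrix.trace, Matrix.diag, Complex.re_sum]
    _ = A.trace.re + B.trace.re := by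
        rw [Matrix.trace_mul_cycle, hU2, one_mul, Matrix.trace_mul_cycle, hU2, one_mul]

lemma herm_decomp {H : Matrix n n ℂ} (hH : H.IsHermitian) :
    ∃ P N : Matrix n n ℂ, P.PosSemidef ∧ N.PosSemidef ∧ H = P - N ∧
      traceNorm H = P.trace.re + N.trace.re := by
  set U : Matrix n n ℂ := (hH.eigenvectorUnitary : Matrix n n ℂ) with hU
  have hU1 : star U * U = 1 := Matrix.mem_unitaryGroup_iff'.mp hH.eigenvectorUnitary.2
  set lam := hH.eigenvalues with hlam
  set P : Matrix n n ℂ :=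
    U * Matrix.diagonal (fun i => ((max (lam i) 0 : ℝ) : ℂ)) * star U with hP
  set N : Matrix n n ℂ :=
    U * Matrix.diagonal (fun i => ((max (-lam i) 0 : ℝ) : ℂ)) * star U with hN
  have hPpsd : P.PosSemidef := by
    rw [hP, Matrix.star_eq_conjTranspose]
    exact (Matrix.posSemidef_diagonal_iff.mpr (fun i =>
      Complex.zero_le_real.mpr (le_max_right _ _))).mul_mul_conjTranspose_same U
  have hNpsd : N.PosSemidef := by
    rw [hN, Matrix.star_eq_conjTranspose]
    exact (Matrix.posSemidef_diagonal_iff.mpr (fun i =>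
      Complex.zero_le_real.mpr (le_max_right _ _))).mul_mul_conjTranspose_same U
  refine ⟨P, N, hPpsd, hNpsd, ?_, ?_⟩
  · rw [hP, hN, ← Matrix.sub_mul, ← Matrix.mul_sub]
    conv_lhs => rw [hH.spectral_theorem, Unitary.conjStarAlgAut_apply]
    rw [← hU, ← hlam]
    have hfg : Matrix.diagonal (RCLike.ofReal ∘ lam)
        = Matrix.diagonal (fun i => ((max (lam i) 0 : ℝ) : ℂ))
          - Matrix.diagonal (fun i => ((max (-lam i) 0 : ℝ) : ℂ)) := by
      rw [Matrix.diagonal_sub]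
      have hfun : (RCLike.ofReal ∘ lam : n → ℂ)
          = fun i => ((max (lam i) 0 : ℝ) : ℂ) - ((max (-lam i) 0 : ℝ) : ℂ) := by
        funext i
        simp only [Function.comp_apply]
        have h0 : lam i = max (lam i) 0 - max (-lam i) 0 := by
          rcases le_or_gt 0 (lam i) with h | h
          · rw [max_eq_left h, max_eq_right (by linarith), sub_zero]
          · rw [max_eq_right h.le, max_eq_left (by linarith), zero_sub, neg_neg]
        norm_cast
        exact congrArg _ h0
      rw [hfun]
    rw [hfg]
  · rw [traceNorm_herm hH, ← hlam]
    have htr : ∀ f : n → ℝ,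
        (U * Matrix.diagonal (fun i => ((f i : ℝ) : ℂ)) * star U).trace.re = ∑ i, f i := by
      intro f
      rw [Matrix.trace_mul_cycle, hU1, one_mul, Matrix.trace_diagonal, Complex.re_sum]
      simp
    rw [hP, hN, htr, htr, ← Finset.sum_add_distrib]
    refine Finset.sum_congr rfl fun i _ => ?_
    rcases le_or_gt 0 (lam i) with h | h
    · rw [abs_of_nonneg h, max_eq_left h, max_eq_right (by linarith), add_zero]
    · rw [abs_of_neg h, max_eq_right h.le, max_eq_left (by linarith), zero_add]

open Kronecker in
lemma kron_sum_left {ι : Type*} {e : Type*} [Fintype e] [DecidableEq e] (s : Finset ι)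
    (f : ι → Matrix n n ℂ) (B : Matrix e e ℂ) :
    (∑ i ∈ s, f i) ⊗ₖ B = ∑ i ∈ s, (f i) ⊗ₖ B := by
  ext q q'
  simp [Matrix.kroneckerMap_apply, Matrix.sum_apply, Finset.sum_mul]

open Kronecker in
lemma sum_traceNorm_le {d o : ℕ} (M : Fin o → Matrix (Fin d) (Fin d) ℂ)
    (hM : ∀ a, (M a).PosSemidef) (hMsum : ∑ a, M a = 1)
    {Δ : Matrix (Fin d × Fin d) (Fin d × Fin d) ℂ} (hΔ : Δ.IsHermitian) :
    ∑ a, traceNorm (ptrace1 ((M a ⊗ₖ (1 : Matrix (Fin d) (Fin d) ℂ)) * Δ)) ≤ traceNorm Δ := by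
  obtain ⟨P, N, hP, hN, hPN, htn⟩ := herm_decomp hΔ
  have hstep : ∀ a, traceNorm (ptrace1 ((M a ⊗ₖ (1 : Matrix (Fin d) (Fin d) ℂ)) * Δ))
      ≤ (ptrace1 ((M a ⊗ₖ (1 : Matrix (Fin d) (Fin d) ℂ)) * P)).trace.re
        + (ptrace1 ((M a ⊗ₖ (1 : Matrix (Fin d) (Fin d) ℂ)) * N)).trace.re := by
    intro a
    have hAa := psd_ptrace_kron (hM a) hP
    have hBa := psd_ptrace_kron (hM a) hN
    have hrw : ptrace1 ((M a ⊗ₖ (1 : Matrix (Fin d) (Fin d) ℂ)) * Δ)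
        = ptrace1 ((M a ⊗ₖ (1 : Matrix (Fin d) (Fin d) ℂ)) * P)
          - ptrace1 ((M a ⊗ₖ (1 : Matrix (Fin d) (Fin d) ℂ)) * N) := by
      rw [hPN, Matrix.mul_sub, ptrace1_sub]
    rw [hrw]
    exact traceNorm_le_of_decomp (Matrix.IsHermitian.sub hAa.1 hBa.1) hAa hBa rfl
  calc ∑ a, traceNorm (ptrace1 ((M a ⊗ₖ (1 : Matrix (Fin d) (Fin d) ℂ)) * Δ))
      ≤ ∑ a, ((ptrace1 ((M a ⊗ₖ (1 : Matrix (Fin d) (Fin d) ℂ)) * P)).trace.re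
          + (ptrace1 ((M a ⊗ₖ (1 : Matrix (Fin d) (Fin d) ℂ)) * N)).trace.re) :=
        Finset.sum_le_sum fun a _ => hstep a
    _ = traceNorm Δ := by
        rw [Finset.sum_add_distrib, htn]
        have hkey : ∀ (Q : Matrix (Fin d × Fin d) (Fin d × Fin d) ℂ),
            ∑ a, (ptrace1 ((M a ⊗ₖ (1 : Matrix (Fin d) (Fin d) ℂ)) * Q)).trace.re
              = Q.trace.re := by
          intro Q
          have h1 : ∑ a, (M a ⊗ₖ (1 : Matrix (Fin d) (Fin d) ℂ))
              = (1 : Matrix (Fin d × Fin d) (Fin d × Fin d) ℂ) := by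
            rw [← kron_sum_left, hMsum, Matrix.one_kronecker_one]
          rw [← Complex.re_sum, ← Matrix.trace_sum, ← ptrace1_sum, ← Finset.sum_mul, h1,
            one_mul, trace_ptrace1]
        rw [hkey, hkey]

lemma sum_filter_prod_eq {m o : ℕ} (c : Fin m → Fin o → ℂ) (hcsum : ∀ x, ∑ b, c x b = 1)
    (x : Fin m) (a : Fin o) :
    ∑ lam ∈ Finset.univ.filter (fun lam : Fin m → Fin o => lam x = a),
      ∏ x', c x' (lam x') = c x a := by
  classical
  rw [Finset.sum_filter]
  have key : ∀ lam : Fin m → Fin o, (if lam x = a then ∏ x', c x' (lam x') else 0)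
      = ∏ x', (if x' = x then (if lam x' = a then c x a else 0) else c x' (lam x')) := by
    intro lam
    by_cases h : lam x = a
    · rw [if_pos h]
      refine Finset.prod_congr rfl fun x' _ => ?_
      by_cases hx : x' = x
      · subst hx; rw [if_pos rfl, if_pos h, ← h]
      · rw [if_neg hx]
    · rw [if_neg h]
      symm
      apply Finset.prod_eq_zero (Finset.mem_univ x)
      rw [if_pos rfl, if_neg h]
  rw [Finset.sum_congr rfl fun lam _ => key lam]
  have := Finset.prod_univ_sum (fun _ : Fin m => (Finset.univ : Finset (Fin o)))
    (fun x' b => (if x' = x then (if b = a then c x a else 0) else c x' b))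
  rw [Fintype.piFinset_univ] at this
  rw [← this]
  rw [Finset.prod_eq_single x]
  · simp [Finset.sum_ite_eq']
  · intro x' _ hx'
    simp only [if_neg hx']
    exact hcsum x'
  · intro h
    exact absurd (Finset.mem_univ x) h

end Aux

/-- The steerability of the state assemblage obtained from `M` and `ρ` is bounded by
the geometric entanglement of `ρ`. -/
theorem steerability_le_entanglement {d m o : ℕ}
    (M : Fin m → Fin o → Matrix (Fin d) (Fin d) ℂ) (hM : IsAssemblage M)
    (p : Fin m → ℝ) (hp : IsWeighting p)
    (ρ : Matrix (Fin d × Fin d) (Fin d × Fin d) ℂ) (hρ : IsDensityMatrix ρ) :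
    Steerability p (fun x a => ptrace1 (((M x a) ⊗ₖ (1 : Matrix (Fin d) (Fin d) ℂ)) * ρ))
      ≤ GeomEntanglement ρ := by
  classical
  -- d is positive
  have hd : 0 < d := by
    rcases Nat.eq_zero_or_pos d with h | h
    · exfalso
      have h2 := hρ.2
      subst h
      rw [Matrix.trace] at h2
      simp at h2
    · exact h
  have hdc : ((d : ℂ)) ≠ 0 := Nat.cast_ne_zero.mpr hd.ne'
  -- the maximally mixed state is separable, so the infimum is over a nonempty type
  have hI1dm : IsDensityMatrix (((d : ℂ)⁻¹) • (1 : Matrix (Fin d) (Fin d) ℂ)) := by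
    constructor
    · refine psd_smul Matrix.PosSemidef.one ?_
      rw [show ((d : ℂ))⁻¹ = (((d : ℝ)⁻¹ : ℝ) : ℂ) by push_cast; ring]
      exact Complex.zero_le_real.mpr (by positivity)
    · rw [Matrix.trace_smul, Matrix.trace_one, smul_eq_mul]
      simp only [Fintype.card_fin]
      exact inv_mul_cancel₀ hdc
  haveI hne : Nonempty {ρS : Matrix (Fin d × Fin d) (Fin d × Fin d) ℂ //
      IsDensityMatrix ρS ∧ IsSeparableState ρS} := by
    refine ⟨⟨(((d : ℂ)⁻¹) • (1 : Matrix (Fin d) (Fin d) ℂ)) ⊗ₖ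
      (((d : ℂ)⁻¹) • (1 : Matrix (Fin d) (Fin d) ℂ)), ?_, ?_⟩⟩
    · have hform : (((d : ℂ)⁻¹) • (1 : Matrix (Fin d) (Fin d) ℂ)) ⊗ₖ
          (((d : ℂ)⁻¹) • (1 : Matrix (Fin d) (Fin d) ℂ))
          = ((d : ℂ)⁻¹ * (d : ℂ)⁻¹) • (1 : Matrix (Fin d × Fin d) (Fin d × Fin d) ℂ) := by
        rw [Matrix.smul_kronecker, Matrix.kronecker_smul, Matrix.one_kronecker_one, smul_smul]
      rw [hform]
      constructor
      · refine psd_smul Matrix.PosSemidef.one ?_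
        rw [show ((d : ℂ))⁻¹ * ((d : ℂ))⁻¹ = ((((d : ℝ)⁻¹ * (d : ℝ)⁻¹ : ℝ)) : ℂ) by
          push_cast; ring]
        exact Complex.zero_le_real.mpr (by positivity)
      · rw [Matrix.trace_smul, Matrix.trace_one, smul_eq_mul]
        simp only [Fintype.card_prod, Fintype.card_fin]
        push_cast
        field_simp
    · exact ⟨1, fun _ => 1, fun _ => ((d : ℂ)⁻¹) • 1, fun _ => ((d : ℂ)⁻¹) • 1,
        fun _ => zero_le_one, by simp, fun _ => hI1dm, fun _ => hI1dm, by simp⟩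
  refine le_ciInf fun s => ?_
  obtain ⟨k, w, A, B, hw0, hw1, hAdm, hBdm, hrep⟩ := s.2.2
  set ρS : Matrix (Fin d × Fin d) (Fin d × Fin d) ℂ := s.1 with hρS
  -- the LHS assemblage induced by ρS
  set τ : Fin m → Fin o → Matrix (Fin d) (Fin d) ℂ :=
    fun x a => ptrace1 ((M x a ⊗ₖ (1 : Matrix (Fin d) (Fin d) ℂ)) * ρS) with hτ
  set c : Fin k → Fin m → Fin o → ℂ := fun j x b => ((M x b) * (A j)).trace with hc
  have hc0 : ∀ j x b, 0 ≤ c j x b := fun j x b => trace_mul_psd_nonneg (hM.1 x b) (hAdm j).1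
  have hcsum : ∀ j x, ∑ b, c j x b = 1 := by
    intro j x
    have hsumM : ∑ b, (M x b) * (A j) = A j := by rw [← Finset.sum_mul, hM.2 x, one_mul]
    calc ∑ b, ((M x b) * (A j)).trace = (∑ b, (M x b) * A j).trace :=
          (Matrix.trace_sum _ _).symm
      _ = (A j).trace := by rw [hsumM]
      _ = 1 := (hAdm j).2
  have hτrep : ∀ x a, τ x a = ∑ j, ((w j : ℂ) * c j x a) • B j := by
    intro x a
    calc τ x a = ptrace1 ((M x a ⊗ₖ (1 : Matrix (Fin d) (Fin d) ℂ))
          * ∑ j, w j • (A j ⊗ₖ B j)) := by rw [hτ, ← hrep]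
      _ = ∑ j, ptrace1 ((M x a ⊗ₖ (1 : Matrix (Fin d) (Fin d) ℂ)) * (w j • (A j ⊗ₖ B j))) := by
          rw [Finset.mul_sum, ptrace1_sum]
      _ = ∑ j, ((w j : ℂ) * c j x a) • B j := by
          refine Finset.sum_congr rfl fun j _ => ?_
          rw [Matrix.mul_smul, ptrace1_smul, ← Matrix.mul_kronecker_mul, Matrix.one_mul,
            ptrace1_kron, ← smul_assoc]
          congr 1
  have hτpsd : ∀ x a, (τ x a).PosSemidef := by
    intro x a
    rw [hτrep]
    exact psd_sum _ _ fun j _ => psd_smul (hBdm j).1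
      (mul_nonneg (Complex.zero_le_real.mpr (hw0 j)) (hc0 j x a))
  have hwsum : ∑ j, ((w j : ℝ) : ℂ) = 1 := by
    rw [← Complex.ofReal_sum, hw1, Complex.ofReal_one]
  have hτtr : ∀ x, ∑ a, (τ x a).trace = 1 := by
    intro x
    calc ∑ a, (τ x a).trace = ∑ a, ∑ j, ((w j : ℂ) * c j x a) := by
          refine Finset.sum_congr rfl fun a _ => ?_
          rw [hτrep, Matrix.trace_sum]
          refine Finset.sum_congr rfl fun j _ => ?_
          rw [Matrix.trace_smul, smul_eq_mul, (hBdm j).2, mul_one]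
      _ = ∑ j, ((w j : ℂ)) := by
          rw [Finset.sum_comm]
          refine Finset.sum_congr rfl fun j _ => ?_
          rw [← Finset.mul_sum, hcsum j x, mul_one]
      _ = 1 := hwsum
  set σ' : (Fin m → Fin o) → Matrix (Fin d) (Fin d) ℂ :=
    fun lam => ∑ j, ((w j : ℂ) * ∏ x, c j x (lam x)) • B j with hσ'
  have hσ'psd : ∀ lam, (σ' lam).PosSemidef := by
    intro lam
    exact psd_sum _ _ fun j _ => psd_smul (hBdm j).1
      (mul_nonneg (Complex.zero_le_real.mpr (hw0 j))
        (Finset.prod_nonneg fun x _ => hc0 j x (lam x)))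
  have hlamsum : ∀ j, ∑ lam : Fin m → Fin o, ∏ x, c j x (lam x) = 1 := by
    intro j
    have h := Finset.prod_univ_sum (fun _ : Fin m => (Finset.univ : Finset (Fin o)))
      (fun x b => c j x b)
    rw [Fintype.piFinset_univ] at h
    rw [← h]
    calc ∏ x, ∑ b, c j x b = ∏ x : Fin m, (1 : ℂ) :=
          Finset.prod_congr rfl fun x _ => hcsum j x
      _ = 1 := Finset.prod_const_one
  have hσ'tr : ∑ lam, (σ' lam).trace = 1 := by
    calc ∑ lam, (σ' lam).trace = ∑ lam : Fin m → Fin o, ∑ j, ((w j : ℂ) * ∏ x, c j x (lam x)) := by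
          refine Finset.sum_congr rfl fun lam _ => ?_
          rw [hσ', Matrix.trace_sum]
          refine Finset.sum_congr rfl fun j _ => ?_
          rw [Matrix.trace_smul, smul_eq_mul, (hBdm j).2, mul_one]
      _ = ∑ j, ((w j : ℂ)) := by
          rw [Finset.sum_comm]
          refine Finset.sum_congr rfl fun j _ => ?_
          rw [← Finset.mul_sum, hlamsum j, mul_one]
      _ = 1 := hwsum
  have hσ'lhs : ∀ x a, τ x a
      = ∑ lam ∈ Finset.univ.filter (fun lam : Fin m → Fin o => lam x = a), σ' lam := by
    intro x a
    rw [hτrep]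
    symm
    calc ∑ lam ∈ Finset.univ.filter (fun lam : Fin m → Fin o => lam x = a),
          ∑ j, ((w j : ℂ) * ∏ x', c j x' (lam x')) • B j
        = ∑ j, ∑ lam ∈ Finset.univ.filter (fun lam : Fin m → Fin o => lam x = a),
            ((w j : ℂ) * ∏ x', c j x' (lam x')) • B j := Finset.sum_comm
      _ = ∑ j, ((w j : ℂ) * c j x a) • B j := by
          refine Finset.sum_congr rfl fun j _ => ?_
          rw [← Finset.sum_smul, ← Finset.mul_sum, sum_filter_prod_eq (c j) (hcsum j) x a]
  have hτfull : IsStateAssemblage τ ∧ HasLHSModel τ :=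
    ⟨⟨hτpsd, hτtr⟩, σ', hσ'psd, hσ'tr, hσ'lhs⟩
  -- bound the infimum by the value at τ
  have hbdd : BddBelow (Set.range fun τ' : {τ' : Fin m → Fin o → Matrix (Fin d) (Fin d) ℂ //
      IsStateAssemblage τ' ∧ HasLHSModel τ'} =>
      (1 / 2 : ℝ) * ∑ x, p x * ∑ a, traceNorm
        ((fun x a => ptrace1 (((M x a) ⊗ₖ (1 : Matrix (Fin d) (Fin d) ℂ)) * ρ)) x a
          - τ'.1 x a)) := by
    refine ⟨0, ?_⟩
    rintro y ⟨τ', rfl⟩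
    refine mul_nonneg (by norm_num) (Finset.sum_nonneg fun x _ => ?_)
    exact mul_nonneg (hp.1 x).le (Finset.sum_nonneg fun a _ => traceNorm_nonneg _)
  have hle := ciInf_le hbdd (⟨τ, hτfull⟩ : {τ' : Fin m → Fin o → Matrix (Fin d) (Fin d) ℂ //
      IsStateAssemblage τ' ∧ HasLHSModel τ'})
  refine le_trans hle ?_
  -- now bound the distance by the trace distance of the states
  have hherm : (ρ - ρS).IsHermitian := hρ.1.1.sub s.2.1.1.1
  have hdiff : ∀ x a, ptrace1 (((M x a) ⊗ₖ (1 : Matrix (Fin d) (Fin d) ℂ)) * ρ) - τ x a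
      = ptrace1 ((M x a ⊗ₖ (1 : Matrix (Fin d) (Fin d) ℂ)) * (ρ - ρS)) := by
    intro x a
    rw [hτ, Matrix.mul_sub, ptrace1_sub]
  calc (1 / 2 : ℝ) * ∑ x, p x * ∑ a, traceNorm
        (ptrace1 (((M x a) ⊗ₖ (1 : Matrix (Fin d) (Fin d) ℂ)) * ρ) - τ x a)
      ≤ (1 / 2 : ℝ) * ∑ x, p x * traceNorm (ρ - ρS) := by
        refine mul_le_mul_of_nonneg_left (Finset.sum_le_sum fun x _ => ?_) (by norm_num)
        refine mul_le_mul_of_nonneg_left ?_ (hp.1 x).le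
        calc ∑ a, traceNorm (ptrace1 (((M x a) ⊗ₖ (1 : Matrix (Fin d) (Fin d) ℂ)) * ρ) - τ x a)
            = ∑ a, traceNorm (ptrace1 ((M x a ⊗ₖ (1 : Matrix (Fin d) (Fin d) ℂ)) * (ρ - ρS))) :=
              Finset.sum_congr rfl fun a _ => by rw [hdiff]
          _ ≤ traceNorm (ρ - ρS) := sum_traceNorm_le (M x) (hM.1 x) (hM.2 x) hherm
    _ = (1 / 2 : ℝ) * traceNorm (ρ - ρS) := by rw [← Finset.sum_mul, hp.2, one_mul]

end
end
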